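/- arXiv:math/0505154 — 5 statements merged into one kernel-verified Lean document; each statement's English description precedes it below -/
import Mathlib

section
/- Every contraction T on a Hilbert space H has a co-isometric extension: there exists a Hilbert space K containing H (via an isometric embedding) and a co-isometry W on K (i.e., W W* = I) such that W restricted to H equals T. -/
open ContinuousLinearMap
open scoped ENNReal NNReal

local notation "⟪" x ", " y "⟫" => @inner ℂ _ _ x y

/-- A co-isometric extension of an operator `T` on a Hilbert space `H`:
a Hilbert space `K` containing `H` (via an isometric embedding) together with
a co-isometry `W` on `K` whose restriction to (the image of) `H` equals `T`. -/
structure CoisometricExtension {H : Type} [NormedAddCommGroup H]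
    [InnerProductSpace ℂ H] [CompleteSpace H] (T : H →L[ℂ] H) where
  K : Type
  [grp : NormedAddCommGroup K]
  [ips : InnerProductSpace ℂ K]
  [cpl : CompleteSpace K]
  emb : H →ₗᵢ[ℂ] K
  W : K →L[ℂ] K
  coisometry : W ∘L ContinuousLinearMap.adjoint W = 1
  extend : ∀ x : H, W (emb x) = emb (T x)

set_option linter.unusedSectionVars false

noncomputable section

variable {H : Type} [NormedAddCommGroup H] [InnerProductSpace ℂ H] [CompleteSpace H]

namespace CoisoAux

/-- prepend `y` to a square-summable sequence -/
def consFun (y : H) (η : lp (fun _ : ℕ => H) 2) : ∀ _ : ℕ, H :=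
  fun n => Nat.casesOn n y (fun m => η m)

lemma memℓp_consFun (y : H) (η : lp (fun _ : ℕ => H) 2) : Memℓp (consFun y η) 2 := by
  apply memℓp_gen
  have h2 : (2 : ℝ≥0∞).toReal = 2 := by norm_num
  have hη : Summable fun n : ℕ => ‖η n‖ ^ (2 : ℝ) := by
    have := (memℓp_gen_iff (p := 2) (f := (η : ∀ _ : ℕ, H)) (by norm_num)).1 (lp.memℓp η)
    simpa [h2] using this
  rw [h2]
  have : Summable fun n : ℕ => ‖consFun y η (n + 1)‖ ^ (2 : ℝ) := by
    simpa [consFun] using hη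
  exact (summable_nat_add_iff 1).1 this

def cons (y : H) (η : lp (fun _ : ℕ => H) 2) : lp (fun _ : ℕ => H) 2 :=
  ⟨consFun y η, memℓp_consFun y η⟩

@[simp] lemma cons_coe (y : H) (η : lp (fun _ : ℕ => H) 2) :
    ⇑(cons y η) = consFun y η := rfl

lemma cons_add (y y' : H) (η η' : lp (fun _ : ℕ => H) 2) :
    cons (y + y') (η + η') = cons y η + cons y' η' := by
  apply lp.ext
  funext n
  simp only [lp.coeFn_add, Pi.add_apply, cons_coe]
  cases n <;> simp [consFun]

lemma cons_smul (c : ℂ) (y : H) (η : lp (fun _ : ℕ => H) 2) :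
    cons (c • y) (c • η) = c • cons y η := by
  apply lp.ext
  funext n
  simp only [lp.coeFn_smul, Pi.smul_apply, cons_coe]
  cases n <;> simp [consFun]

lemma inner_cons_cons (y y' : H) (η η' : lp (fun _ : ℕ => H) 2) :
    ⟪cons y η, cons y' η'⟫ = ⟪y, y'⟫ + ⟪η, η'⟫ := by
  rw [lp.inner_eq_tsum, lp.inner_eq_tsum]
  rw [Summable.tsum_eq_zero_add (lp.summable_inner (𝕜 := ℂ) (cons y η) (cons y' η'))]
  simp [consFun]



variable (T : H →L[ℂ] H)

lemma pos_one_sub (hT : ‖T‖ ≤ 1) : (0 : H →L[ℂ] H) ≤ 1 - T ∘L adjoint T := by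
  rw [ContinuousLinearMap.nonneg_iff_isPositive]
  constructor
  · have h1 : IsSelfAdjoint (T ∘L adjoint T) := by
      rw [ContinuousLinearMap.isSelfAdjoint_iff']
      simp [ContinuousLinearMap.adjoint_comp]
    exact ((IsSelfAdjoint.one _).sub h1).isSymmetric
  · intro x
    have h1 : ⟪(T ∘L adjoint T) x, x⟫ = ⟪adjoint T x, adjoint T x⟫ := by
      nth_rewrite 1 [← ContinuousLinearMap.adjoint_adjoint T]
      rw [ContinuousLinearMap.comp_apply, ContinuousLinearMap.adjoint_inner_left]
    have h2 : ‖adjoint T x‖ ≤ ‖x‖ := by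
      calc ‖adjoint T x‖ ≤ ‖adjoint T‖ * ‖x‖ := (adjoint T).le_opNorm x
        _ ≤ 1 * ‖x‖ := by
            apply mul_le_mul_of_nonneg_right _ (norm_nonneg x)
            calc ‖adjoint T‖ = ‖T‖ := by
                  exact LinearIsometryEquiv.norm_map
                    (ContinuousLinearMap.adjoint : (H →L[ℂ] H) ≃ₗᵢ⋆[ℂ] (H →L[ℂ] H)) T
              _ ≤ 1 := hT
        _ = ‖x‖ := one_mul _
    rw [ContinuousLinearMap.reApplyInnerSelf_apply]
    have h3 : RCLike.re ⟪(1 - T ∘L adjoint T) x, x⟫ = ‖x‖ ^ 2 - ‖adjoint T x‖ ^ 2 := by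
      rw [ContinuousLinearMap.sub_apply, ContinuousLinearMap.one_apply, inner_sub_left,
        map_sub, h1, inner_self_eq_norm_sq, inner_self_eq_norm_sq]
    rw [h3]
    nlinarith [norm_nonneg (adjoint T x), norm_nonneg x]



set_option synthInstance.maxHeartbeats 1000000 in
def D (T : H →L[ℂ] H) : H →L[ℂ] H := CFC.sqrt (1 - T ∘L adjoint T)

set_option synthInstance.maxHeartbeats 1000000 in
lemma D_sa (T : H →L[ℂ] H) : IsSelfAdjoint (D T) :=
  IsSelfAdjoint.of_nonneg (CFC.sqrt_nonneg _)

set_option synthInstance.maxHeartbeats 1000000 in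
lemma D_sq (T : H →L[ℂ] H) (hT : ‖T‖ ≤ 1) : D T ∘L D T = 1 - T ∘L adjoint T := by
  have h := CFC.sq_sqrt (1 - T ∘L adjoint T) (pos_one_sub T hT)
  rwa [sq, ContinuousLinearMap.mul_def] at h

lemma key (T : H →L[ℂ] H) (hT : ‖T‖ ≤ 1) (a b : H) :
    ⟪adjoint T a, adjoint T b⟫ + ⟪D T a, D T b⟫ = ⟪a, b⟫ := by
  rw [ContinuousLinearMap.adjoint_inner_left]
  nth_rewrite 1 [← (ContinuousLinearMap.isSelfAdjoint_iff'.mp (D_sa T))]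
  rw [ContinuousLinearMap.adjoint_inner_left]
  rw [← inner_add_right]
  congr 1
  have h2 : (T ∘L adjoint T) b + (D T ∘L D T) b = b := by
    rw [D_sq T hT]; simp
  simpa using h2

/-- the second component of the isometric dilation -/
def consL (T : H →L[ℂ] H) :
    H × lp (fun _ : ℕ => H) 2 →ₗ[ℂ] lp (fun _ : ℕ => H) 2 where
  toFun z := cons (D T z.1) z.2
  map_add' z w := by
    show cons (D T (z.1 + w.1)) (z.2 + w.2) = _
    rw [map_add, cons_add]
  map_smul' c z := by
    show cons (D T (c • z.1)) (c • z.2) = _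
    rw [map_smul, cons_smul]; rfl

/-- the isometric dilation of `adjoint T`, as a linear map -/
def VL (T : H →L[ℂ] H) :
    WithLp 2 (H × lp (fun _ : ℕ => H) 2) →ₗ[ℂ] WithLp 2 (H × lp (fun _ : ℕ => H) 2) :=
  (WithLp.linearEquiv 2 ℂ _).symm.toLinearMap ∘ₗ
    (LinearMap.prod ((adjoint T).toLinearMap ∘ₗ LinearMap.fst ℂ H _) (consL T)) ∘ₗ
      (WithLp.linearEquiv 2 ℂ _).toLinearMap

lemma inner_VL (T : H →L[ℂ] H) (hT : ‖T‖ ≤ 1)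
    (z w : WithLp 2 (H × lp (fun _ : ℕ => H) 2)) :
    ⟪VL T z, VL T w⟫ = ⟪z, w⟫ := by
  show ⟪adjoint T z.fst, adjoint T w.fst⟫ +
      ⟪cons (D T z.fst) z.snd, cons (D T w.fst) w.snd⟫ =
    ⟪z.fst, w.fst⟫ + ⟪z.snd, w.snd⟫
  rw [inner_cons_cons, ← add_assoc, key T hT]

end CoisoAux


end

/-- Every contraction on a Hilbert space has a co-isometric extension. -/
theorem contraction_has_coisometric_extension {H : Type} [NormedAddCommGroup H]
    [InnerProductSpace ℂ H] [CompleteSpace H] (T : H →L[ℂ] H) (hT : ‖T‖ ≤ 1) :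
    Nonempty (CoisometricExtension T) := by
  classical
  set K₀ := lp (fun _ : ℕ => H) 2 with hK₀
  let V : WithLp 2 (H × K₀) →ₗᵢ[ℂ] WithLp 2 (H × K₀) :=
    LinearMap.isometryOfInner (CoisoAux.VL T) (CoisoAux.inner_VL T hT)
  let V' : WithLp 2 (H × K₀) →L[ℂ] WithLp 2 (H × K₀) := V.toContinuousLinearMap
  let W : WithLp 2 (H × K₀) →L[ℂ] WithLp 2 (H × K₀) := ContinuousLinearMap.adjoint V'
  let embL : H →ₗ[ℂ] WithLp 2 (H × K₀) :=
    (WithLp.linearEquiv 2 ℂ _).symm.toLinearMap ∘ₗ LinearMap.inl ℂ H K₀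
  let emb : H →ₗᵢ[ℂ] WithLp 2 (H × K₀) :=
    LinearMap.isometryOfInner embL (by
      intro x y
      show (⟪x, y⟫ : ℂ) + ⟪(0 : K₀), (0 : K₀)⟫ = ⟪x, y⟫
      simp)
  have hco : W ∘L ContinuousLinearMap.adjoint W = 1 := by
    show ContinuousLinearMap.adjoint V' ∘L
      ContinuousLinearMap.adjoint (ContinuousLinearMap.adjoint V') = 1
    rw [ContinuousLinearMap.adjoint_adjoint]
    ext z
    refine ext_inner_right ℂ fun y => ?_
    rw [ContinuousLinearMap.comp_apply, ContinuousLinearMap.adjoint_inner_left,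
      ContinuousLinearMap.one_apply]
    show ⟪V z, V y⟫ = ⟪z, y⟫
    exact V.inner_map_map z y
  have hext : ∀ x : H, W (emb x) = emb (T x) := by
    intro x
    refine ext_inner_right ℂ fun z => ?_
    show ⟪ContinuousLinearMap.adjoint V' (emb x), z⟫ = _
    rw [ContinuousLinearMap.adjoint_inner_left]
    show (⟪x, adjoint T z.fst⟫ : ℂ) + ⟪(0 : K₀), CoisoAux.cons (CoisoAux.D T z.fst) z.snd⟫ =
      ⟪T x, z.fst⟫ + ⟪(0 : K₀), z.snd⟫
    rw [ContinuousLinearMap.adjoint_inner_right]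
    simp
  exact ⟨{ K := WithLp 2 (H × K₀)
           emb := emb
           W := W
           coisometry := hco
           extend := hext }⟩
end

section
/- Every contraction T on a Hilbert space H has a unitary dilation: there exists a Hilbert space K containing H and a unitary U on K such that T^n = P U^n |_H for all n ≥ 0, where P is the orthogonal projection of K onto H. -/
open ContinuousLinearMap

/-- A unitary dilation of an operator `T` on a Hilbert space `H`: a Hilbert space `K`
containing `H` isometrically and a unitary `U` on `K` with `T^n = P U^n |_H` for all
`n ≥ 0`.  The compression condition `T^n = P U^n |_H` (with `P` the orthogonal
projection of `K` onto `H`) is expressed equivalently via inner ℂ products: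
`⟪U^n (emb x), emb y⟫ = ⟪T^n x, y⟫` for all `x y : H`. -/
structure UnitaryDilation {H : Type} [NormedAddCommGroup H]
    [InnerProductSpace ℂ H] [CompleteSpace H] (T : H →L[ℂ] H) where
  K : Type
  [grp : NormedAddCommGroup K]
  [ips : InnerProductSpace ℂ K]
  [cpl : CompleteSpace K]
  emb : H →ₗᵢ[ℂ] K
  U : K →L[ℂ] K
  unitary_right : U ∘L ContinuousLinearMap.adjoint U = 1
  unitary_left : ContinuousLinearMap.adjoint U ∘L U = 1
  dilation : ∀ (n : ℕ) (x y : H),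
    (inner ℂ ((U ^ n) (emb x)) (emb y) : ℂ) = (inner ℂ ((T ^ n) x) y : ℂ)

namespace SzNagyAux

open Polynomial RCLike
open scoped ENNReal

variable {H : Type} [NormedAddCommGroup H] [InnerProductSpace ℂ H] [CompleteSpace H]

local notation "A" => H →L[ℂ] H
local notation "K" => lp (fun _ : ℤ => H) 2

/-! ### Intertwining of square roots -/

lemma pow_intertwine {t a b : A} (h : t * a = b * t) : ∀ n : ℕ, t * a ^ n = b ^ n * t
  | 0 => by simp
  | n + 1 => by
      rw [pow_succ, ← mul_assoc, pow_intertwine h n, mul_assoc, h, ← mul_assoc, ← pow_succ]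

lemma aeval_intertwine {t a b : A} (h : t * a = b * t) (p : ℝ[X]) :
    t * aeval a p = aeval b p * t := by
  induction p using Polynomial.induction_on' with
  | add p q hp hq => simp [mul_add, add_mul, hp, hq]
  | monomial n r =>
      simp only [aeval_monomial]
      calc t * (algebraMap ℝ A r * a ^ n) = algebraMap ℝ A r * (t * a ^ n) := by
            rw [← mul_assoc, ← Algebra.commutes r t, mul_assoc]
        _ = algebraMap ℝ A r * (b ^ n * t) := by rw [pow_intertwine h n]
        _ = algebraMap ℝ A r * b ^ n * t := by rw [mul_assoc]

lemma sqrt_intertwine {t a b : A} (ha : 0 ≤ a) (hb : 0 ≤ b) (h : t * a = b * t) :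
    t * cfc Real.sqrt a = cfc Real.sqrt b * t := by
  have ha' : IsSelfAdjoint a := .of_nonneg ha
  have hb' : IsSelfAdjoint b := .of_nonneg hb
  set R : ℝ := max (‖a‖ * ‖(1 : A)‖) (‖b‖ * ‖(1 : A)‖) with hR
  have hspec : ∀ c : A, IsSelfAdjoint c → 0 ≤ c → ‖c‖ * ‖(1:A)‖ ≤ R →
      spectrum ℝ c ⊆ Set.Icc 0 R := by
    intro c hc hc0 hcR x hx
    refine ⟨spectrum_nonneg_of_nonneg hc0 hx, ?_⟩
    calc x ≤ ‖x‖ := le_abs_self x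
      _ ≤ ‖c‖ * ‖(1:A)‖ := spectrum.norm_le_norm_mul_of_mem hx
      _ ≤ R := hcR
  have hsa := hspec a ha' ha (le_max_left _ _)
  have hsb := hspec b hb' hb (le_max_right _ _)
  have key : ∀ ε : ℝ, 0 < ε → ‖t * cfc Real.sqrt a - cfc Real.sqrt b * t‖ ≤ 2 * ‖t‖ * ε := by
    intro ε hε
    obtain ⟨p, hp⟩ := exists_polynomial_near_of_continuousOn 0 R Real.sqrt
      (Real.continuous_sqrt.continuousOn) ε hε
    have hclose : ∀ c : A, spectrum ℝ c ⊆ Set.Icc 0 R → IsSelfAdjoint c →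
        ‖cfc Real.sqrt c - cfc (fun x => eval x p) c‖ ≤ ε := by
      intro c hsc hc
      rw [← cfc_sub Real.sqrt (fun x => eval x p) c (Real.continuous_sqrt.continuousOn)
        (p.continuous_aeval.continuousOn)]
      refine norm_cfc_le hε.le fun x hx => ?_
      have := hp x (hsc hx)
      rw [Real.norm_eq_abs, abs_sub_comm]
      exact this.le
    have hpoly : t * cfc (fun x => eval x p) a = cfc (fun x => eval x p) b * t := by
      rw [cfc_polynomial p a ha', cfc_polynomial p b hb']
      exact aeval_intertwine h p
    have hsplit : t * cfc Real.sqrt a - cfc Real.sqrt b * t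
        = t * (cfc Real.sqrt a - cfc (fun x => eval x p) a)
          - (cfc Real.sqrt b - cfc (fun x => eval x p) b) * t := by
      rw [mul_sub, sub_mul, hpoly]; abel
    rw [hsplit]
    calc ‖_ - _‖ ≤ ‖t * (cfc Real.sqrt a - cfc (fun x => eval x p) a)‖
          + ‖(cfc Real.sqrt b - cfc (fun x => eval x p) b) * t‖ := norm_sub_le _ _
      _ ≤ ‖t‖ * ε + ε * ‖t‖ := by
          gcongr
          · calc ‖t * _‖ ≤ ‖t‖ * ‖_‖ := norm_mul_le _ _
              _ ≤ ‖t‖ * ε := by gcongr; exact hclose a hsa ha'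
          · calc ‖_ * t‖ ≤ ‖_‖ * ‖t‖ := norm_mul_le _ _
              _ ≤ ε * ‖t‖ := by gcongr; exact hclose b hsb hb'
      _ = 2 * ‖t‖ * ε := by ring
  have hz : ‖t * cfc Real.sqrt a - cfc Real.sqrt b * t‖ ≤ 0 := by
    refine le_of_forall_pos_le_add fun ε hε => ?_
    have h2 := key (ε / (2 * ‖t‖ + 1)) (by positivity)
    have h3 : 2 * ‖t‖ * (ε / (2 * ‖t‖ + 1)) ≤ ε := by
      rw [div_eq_mul_inv, ← mul_assoc, mul_inv_le_iff₀ (by positivity)]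
      nlinarith [norm_nonneg t]
    linarith
  rw [sub_eq_zero.mp (norm_le_zero_iff.mp hz)]

/-! ### The defect operator -/

lemma nonneg_defect (T : A) (hT : ‖T‖ ≤ 1) : 0 ≤ 1 - adjoint T * T := by
  rw [ContinuousLinearMap.nonneg_iff_isPositive]
  constructor
  · have h1 : IsSelfAdjoint (adjoint T * T) := by
      rw [IsSelfAdjoint, star_mul, star_eq_adjoint, star_eq_adjoint, adjoint_adjoint]
    exact ((IsSelfAdjoint.one A).sub h1).isSymmetric
  · intro x
    have h2 : ‖T x‖ ≤ ‖x‖ := by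
      calc ‖T x‖ ≤ ‖T‖ * ‖x‖ := T.le_opNorm x
        _ ≤ 1 * ‖x‖ := by gcongr
        _ = ‖x‖ := one_mul _
    have h3 : ((1 : A) - adjoint T * T).reApplyInnerSelf x = ‖x‖ ^ 2 - ‖T x‖ ^ 2 := by
      rw [reApplyInnerSelf_apply, ContinuousLinearMap.sub_apply, inner_sub_left, ContinuousLinearMap.mul_apply, ContinuousLinearMap.one_apply,
        adjoint_inner_left, map_sub, ← norm_sq_eq_re_inner (𝕜 := ℂ) x,
        ← norm_sq_eq_re_inner (𝕜 := ℂ) (T x)]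
    rw [h3]
    nlinarith [norm_nonneg (T x), norm_nonneg x]

/-- The defect operator `√(1 - T*T)`. -/
noncomputable def Dlow (T : A) : A := cfc Real.sqrt (1 - adjoint T * T)

lemma Dlow_sa (T : A) : IsSelfAdjoint (Dlow T) := cfc_predicate _ _

lemma Dlow_sq (T : A) (hT : ‖T‖ ≤ 1) : Dlow T * Dlow T = 1 - adjoint T * T := by
  have ha := nonneg_defect T hT
  have h1 : Dlow T * Dlow T = cfc (fun x : ℝ => Real.sqrt x * Real.sqrt x)
      (1 - adjoint T * T) :=
    (cfc_mul _ _ _ (Real.continuous_sqrt.continuousOn) (Real.continuous_sqrt.continuousOn)).symm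
  rw [h1, cfc_congr (g := fun x : ℝ => x)
    (fun x hx => Real.mul_self_sqrt (spectrum_nonneg_of_nonneg ha hx)),
    cfc_id' ℝ _ (.of_nonneg ha)]

/-! ### lp constructions -/

lemma two_toReal_pos : (0:ℝ) < (2 : ℝ≥0∞).toReal := by norm_num

lemma mem_shift (e : ℤ ≃ ℤ) (ξ : K) : Memℓp (fun n => ξ (e n)) 2 := by
  have h := lp.memℓp ξ
  rw [memℓp_gen_iff two_toReal_pos] at h ⊢
  exact (e.summable_iff (f := fun i => ‖ξ i‖ ^ (2 : ℝ≥0∞).toReal)).mpr h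

/-- reindexing by an equivalence of `ℤ` as a linear isometry equivalence of `lp`. -/
noncomputable def shiftE (e : ℤ ≃ ℤ) : K ≃ₗᵢ[ℂ] K where
  toFun ξ := ⟨fun n => ξ (e n), mem_shift e ξ⟩
  invFun ξ := ⟨fun n => ξ (e.symm n), mem_shift e.symm ξ⟩
  map_add' ξ η := by
    apply lp.ext; funext n
    simp only [lp.coeFn_add, Pi.add_apply]
  map_smul' c ξ := by
    apply lp.ext; funext n
    simp only [lp.coeFn_smul, Pi.smul_apply, RingHom.id_apply]
  left_inv ξ := by apply lp.ext; funext n; exact congrArg ξ (e.apply_symm_apply n)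
  right_inv ξ := by apply lp.ext; funext n; exact congrArg ξ (e.symm_apply_apply n)
  norm_map' ξ := by
    refine Real.rpow_left_injOn two_toReal_pos.ne' (lp.norm_nonneg' _) (lp.norm_nonneg' _) ?_
    beta_reduce
    rw [lp.norm_rpow_eq_tsum two_toReal_pos, lp.norm_rpow_eq_tsum two_toReal_pos]
    exact e.tsum_eq fun n => ‖ξ n‖ ^ (2 : ℝ≥0∞).toReal

lemma shiftE_apply (e : ℤ ≃ ℤ) (ξ : K) (n : ℤ) : (shiftE e ξ) n = ξ (e n) := rfl

variable (W X Y Z : H →L[ℂ] H)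

/-- The map acting as the operator matrix on coordinates `(-1, 0)` and identity elsewhere. -/
noncomputable def blockAux (ξ : K) : K :=
  ξ + lp.single 2 (-1) (W (ξ 0) + X (ξ (-1)) - ξ (-1))
    + lp.single 2 0 (Y (ξ 0) + Z (ξ (-1)) - ξ 0)

lemma blockAux_coord (ξ : K) (m : ℤ) :
    blockAux W X Y Z ξ m = ξ m + (lp.single 2 (-1) (W (ξ 0) + X (ξ (-1)) - ξ (-1)) : K) m
      + (lp.single 2 0 (Y (ξ 0) + Z (ξ (-1)) - ξ 0) : K) m := rfl

lemma blockAux_apply_neg_one (ξ : K) : blockAux W X Y Z ξ (-1) = W (ξ 0) + X (ξ (-1)) := by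
  rw [blockAux_coord, lp.single_apply_self, lp.single_apply_ne 2 0 _ (by norm_num : (-1:ℤ) ≠ 0)]
  abel

lemma blockAux_apply_zero (ξ : K) : blockAux W X Y Z ξ 0 = Y (ξ 0) + Z (ξ (-1)) := by
  rw [blockAux_coord, lp.single_apply_self, lp.single_apply_ne 2 (-1) _ (by norm_num : (0:ℤ) ≠ -1)]
  abel

lemma blockAux_apply_other (ξ : K) {m : ℤ} (h1 : m ≠ -1) (h0 : m ≠ 0) :
    blockAux W X Y Z ξ m = ξ m := by
  rw [blockAux_coord, lp.single_apply_ne 2 (-1) _ h1, lp.single_apply_ne 2 0 _ h0]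
  abel

lemma lp_single_add {i : ℤ} (x y : H) :
    lp.single 2 i (x + y) = lp.single 2 i x + (lp.single 2 i y : K) := by
  apply lp.ext; funext n
  by_cases h : n = i
  · subst h
    rw [lp.coeFn_add, Pi.add_apply, lp.single_apply_self, lp.single_apply_self,
      lp.single_apply_self]
  · rw [lp.coeFn_add, Pi.add_apply, lp.single_apply_ne 2 i _ h, lp.single_apply_ne 2 i _ h,
      lp.single_apply_ne 2 i _ h, add_zero]

lemma blockAux_add (ξ η : K) :
    blockAux W X Y Z (ξ + η) = blockAux W X Y Z ξ + blockAux W X Y Z η := by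
  unfold blockAux
  have h0 : (↑(ξ + η) : ∀ _ : ℤ, H) 0 = ξ 0 + η 0 := by rw [lp.coeFn_add]; rfl
  have h1 : (↑(ξ + η) : ∀ _ : ℤ, H) (-1) = ξ (-1) + η (-1) := by rw [lp.coeFn_add]; rfl
  rw [h0, h1, map_add W, map_add X, map_add Y, map_add Z,
    show W (ξ 0) + W (η 0) + (X (ξ (-1)) + X (η (-1))) - (ξ (-1) + η (-1))
      = (W (ξ 0) + X (ξ (-1)) - ξ (-1)) + (W (η 0) + X (η (-1)) - η (-1)) by abel,
    show Y (ξ 0) + Y (η 0) + (Z (ξ (-1)) + Z (η (-1))) - (ξ 0 + η 0)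
      = (Y (ξ 0) + Z (ξ (-1)) - ξ 0) + (Y (η 0) + Z (η (-1)) - η 0) by abel,
    lp_single_add, lp_single_add]
  abel

lemma blockAux_smul (c : ℂ) (ξ : K) :
    blockAux W X Y Z (c • ξ) = c • blockAux W X Y Z ξ := by
  unfold blockAux
  have h0 : (↑(c • ξ) : ∀ _ : ℤ, H) 0 = c • ξ 0 := by rw [lp.coeFn_smul]; rfl
  have h1 : (↑(c • ξ) : ∀ _ : ℤ, H) (-1) = c • ξ (-1) := by rw [lp.coeFn_smul]; rfl
  rw [h0, h1, map_smul W, map_smul X, map_smul Y, map_smul Z,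
    show c • W (ξ 0) + c • X (ξ (-1)) - c • ξ (-1)
      = c • (W (ξ 0) + X (ξ (-1)) - ξ (-1)) by rw [smul_sub, smul_add],
    show c • Y (ξ 0) + c • Z (ξ (-1)) - c • ξ 0
      = c • (Y (ξ 0) + Z (ξ (-1)) - ξ 0) by rw [smul_sub, smul_add],
    lp.single_smul, lp.single_smul, smul_add, smul_add]

lemma blockAux_norm
    (hid : ∀ a b : H, ‖W b + X a‖ ^ 2 + ‖Y b + Z a‖ ^ 2 = ‖b‖ ^ 2 + ‖a‖ ^ 2)
    (ξ : K) : ‖blockAux W X Y Z ξ‖ = ‖ξ‖ := by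
  have hcast : ∀ x : ℝ, x ^ (2 : ℝ≥0∞).toReal = x ^ (2 : ℕ) := fun x => by
    rw [show (2 : ℝ≥0∞).toReal = ((2:ℕ):ℝ) by norm_num]; exact Real.rpow_natCast x 2
  have hsf := lp.hasSum_norm two_toReal_pos ξ
  have hsg := lp.hasSum_norm two_toReal_pos (blockAux W X Y Z ξ)
  set h : ℤ → ℝ := fun m =>
    ‖blockAux W X Y Z ξ m‖ ^ (2 : ℝ≥0∞).toReal - ‖ξ m‖ ^ (2 : ℝ≥0∞).toReal with hh
  have hsupp : ∀ m ∉ ({-1, 0} : Finset ℤ), h m = 0 := by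
    intro m hm
    simp only [Finset.mem_insert, Finset.mem_singleton, not_or] at hm
    simp [hh, blockAux_apply_other W X Y Z ξ hm.1 hm.2]
  have hsum_h : Summable h := summable_of_ne_finset_zero hsupp
  have htsum : ∑' m, h m = 0 := by
    rw [tsum_eq_sum hsupp, Finset.sum_pair (by norm_num : (-1:ℤ) ≠ 0)]
    simp only [hh, blockAux_apply_neg_one, blockAux_apply_zero, hcast]
    have := hid (ξ (-1)) (ξ 0)
    push_cast
    linarith
  have hg : HasSum (fun m => ‖blockAux W X Y Z ξ m‖ ^ (2 : ℝ≥0∞).toReal)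
      (‖ξ‖ ^ (2 : ℝ≥0∞).toReal) := by
    have h2 := hsf.add (hsum_h.hasSum)
    rw [htsum, add_zero] at h2
    convert h2 using 2 with m
    simp [hh]
  refine Real.rpow_left_injOn two_toReal_pos.ne' (lp.norm_nonneg' _) (lp.norm_nonneg' _) ?_
  beta_reduce
  exact hsg.unique hg

/-- The block map as a linear isometry equivalence. -/
noncomputable def blockE (W' X' Y' Z' : H →L[ℂ] H)
    (hid : ∀ a b : H, ‖W b + X a‖ ^ 2 + ‖Y b + Z a‖ ^ 2 = ‖b‖ ^ 2 + ‖a‖ ^ 2)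
    (hli : ∀ ξ : K, blockAux W' X' Y' Z' (blockAux W X Y Z ξ) = ξ)
    (hri : ∀ ξ : K, blockAux W X Y Z (blockAux W' X' Y' Z' ξ) = ξ) : K ≃ₗᵢ[ℂ] K where
  toFun := blockAux W X Y Z
  invFun := blockAux W' X' Y' Z'
  map_add' := blockAux_add W X Y Z
  map_smul' c ξ := blockAux_smul W X Y Z c ξ
  left_inv := hli
  right_inv := hri
  norm_map' := blockAux_norm W X Y Z hid

/-- The embedding of `H` as the `0`-th coordinate of `lp`. -/
noncomputable def embAux : H →ₗᵢ[ℂ] K where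
  toLinearMap :=
    { toFun := fun x => lp.single 2 0 x
      map_add' := fun x y => lp_single_add x y
      map_smul' := fun c x => by
        show lp.single 2 0 (c • x) = (RingHom.id ℂ c) • (lp.single 2 0 x : lp (fun _ : ℤ => H) 2)
        rw [RingHom.id_apply, lp.single_smul] }
  norm_map' x := lp.norm_single (E := fun _ : ℤ => H) (p := 2) (by norm_num : (0:ℝ≥0∞) < 2) (0:ℤ) x

lemma embAux_apply (x : H) : (embAux x : K) = lp.single 2 0 x := rfl

end SzNagyAux

set_option maxHeartbeats 1000000 in
/-- Every contraction on a Hilbert space has a unitary dilation. -/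
theorem contraction_has_unitary_dilation {H : Type} [NormedAddCommGroup H]
    [InnerProductSpace ℂ H] [CompleteSpace H] (T : H →L[ℂ] H) (hT : ‖T‖ ≤ 1) :
    Nonempty (UnitaryDilation T) := by
  classical
  open SzNagyAux in
  -- notation
  set K := lp (fun _ : ℤ => H) 2 with hK
  have hT' : ‖adjoint T‖ ≤ 1 := by
    rw [show ‖adjoint T‖ = ‖T‖ from (adjoint : (H →L[ℂ] H) ≃ₗᵢ⋆[ℂ] _).norm_map T]
    exact hT
  set Dd := Dlow T with hDd
  set Dp := Dlow (adjoint T) with hDp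
  have ha : (0 : H →L[ℂ] H) ≤ 1 - adjoint T * T := nonneg_defect T hT
  have hb : (0 : H →L[ℂ] H) ≤ 1 - adjoint (adjoint T) * adjoint T := nonneg_defect _ hT'
  have hb' : (0 : H →L[ℂ] H) ≤ 1 - T * adjoint T := by rwa [adjoint_adjoint] at hb
  have hDsa : IsSelfAdjoint Dd := Dlow_sa T
  have hDpsa : IsSelfAdjoint Dp := Dlow_sa (adjoint T)
  have hDDsq : Dd * Dd = 1 - adjoint T * T := Dlow_sq T hT
  have hPPsq : Dp * Dp = 1 - T * adjoint T := by
    rw [hDp, Dlow_sq (adjoint T) hT', adjoint_adjoint]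
  have hTD : T * Dd = Dp * T := by
    rw [hDd, hDp, Dlow, Dlow]
    refine sqrt_intertwine ha hb ?_
    rw [adjoint_adjoint]
    noncomm_ring
  have hDT : Dd * adjoint T = adjoint T * Dp := by
    calc Dd * adjoint T = star Dd * star T := by rw [hDsa.star_eq, star_eq_adjoint]
      _ = star (T * Dd) := (star_mul _ _).symm
      _ = star (Dp * T) := by rw [hTD]
      _ = star T * star Dp := star_mul _ _
      _ = adjoint T * Dp := by rw [hDpsa.star_eq, star_eq_adjoint]
  -- vector versions
  have vTD : ∀ v : H, T (Dd v) = Dp (T v) := fun v => by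
    have := DFunLike.congr_fun hTD v; simpa [ContinuousLinearMap.mul_apply] using this
  have vDT : ∀ v : H, Dd (adjoint T v) = adjoint T (Dp v) := fun v => by
    have := DFunLike.congr_fun hDT v; simpa [ContinuousLinearMap.mul_apply] using this
  have vDD : ∀ v : H, Dd (Dd v) = v - adjoint T (T v) := fun v => by
    have := DFunLike.congr_fun hDDsq v
    simpa [ContinuousLinearMap.mul_apply, ContinuousLinearMap.sub_apply] using this
  have vPP : ∀ v : H, Dp (Dp v) = v - T (adjoint T v) := fun v => by
    have := DFunLike.congr_fun hPPsq v
    simpa [ContinuousLinearMap.mul_apply, ContinuousLinearMap.sub_apply] using this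
  -- norm identities
  have hf1 : ∀ v : H, ‖T v‖ ^ 2 + ‖Dd v‖ ^ 2 = ‖v‖ ^ 2 := by
    intro v
    have h1 : (inner ℂ (Dd v) (Dd v) : ℂ) = inner ℂ v (Dd (Dd v)) := by
      nth_rewrite 1 [← hDsa.adjoint_eq]
      rw [adjoint_inner_left]
    have h2 : (inner ℂ v (adjoint T (T v)) : ℂ) = inner ℂ (T v) (T v) := by
      rw [adjoint_inner_right]
    have h3 : (inner ℂ (Dd v) (Dd v) : ℂ) = inner ℂ v v - inner ℂ (T v) (T v) := by
      rw [h1, vDD, inner_sub_right, h2]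
    have h4 := congrArg RCLike.re h3
    rw [map_sub, ← norm_sq_eq_re_inner (𝕜 := ℂ), ← norm_sq_eq_re_inner (𝕜 := ℂ),
      ← norm_sq_eq_re_inner (𝕜 := ℂ)] at h4
    linarith
  have hf2 : ∀ v : H, ‖adjoint T v‖ ^ 2 + ‖Dp v‖ ^ 2 = ‖v‖ ^ 2 := by
    intro v
    have h1 : (inner ℂ (Dp v) (Dp v) : ℂ) = inner ℂ v (Dp (Dp v)) := by
      nth_rewrite 1 [← hDpsa.adjoint_eq]
      rw [adjoint_inner_left]
    have h2 : (inner ℂ v (T (adjoint T v)) : ℂ) = inner ℂ (adjoint T v) (adjoint T v) := by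
      nth_rewrite 1 [← adjoint_adjoint (A := T)]
      rw [adjoint_inner_right]
    have h3 : (inner ℂ (Dp v) (Dp v) : ℂ) = inner ℂ v v - inner ℂ (adjoint T v) (adjoint T v) := by
      rw [h1, vPP, inner_sub_right, h2]
    have h4 := congrArg RCLike.re h3
    rw [map_sub, ← norm_sq_eq_re_inner (𝕜 := ℂ), ← norm_sq_eq_re_inner (𝕜 := ℂ),
      ← norm_sq_eq_re_inner (𝕜 := ℂ)] at h4
    linarith
  have hf3 : ∀ a v : H, (inner ℂ (T v) (Dp a) : ℂ) = inner ℂ (Dd v) (adjoint T a) := by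
    intro a v
    have h1 : (inner ℂ (T v) (Dp a) : ℂ) = inner ℂ (Dp (T v)) a := by
      nth_rewrite 1 [← hDpsa.adjoint_eq]
      rw [adjoint_inner_right]
    have h2 : (inner ℂ (Dd v) (adjoint T a) : ℂ) = inner ℂ (T (Dd v)) a := by
      rw [adjoint_inner_right]
    rw [h1, h2, vTD]
  have hid_fwd : ∀ a v : H,
      ‖T v + Dp a‖ ^ 2 + ‖Dd v + (-adjoint T) a‖ ^ 2 = ‖v‖ ^ 2 + ‖a‖ ^ 2 := by
    intro a v
    rw [norm_add_sq (𝕜 := ℂ), norm_add_sq (𝕜 := ℂ)]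
    have h3 := congrArg RCLike.re (hf3 a v)
    have e1 : (inner ℂ (Dd v) ((-adjoint T) a) : ℂ) = - inner ℂ (Dd v) (adjoint T a) := by
      rw [ContinuousLinearMap.neg_apply, inner_neg_right]
    have e2 : ‖(-adjoint T) a‖ = ‖adjoint T a‖ := by
      rw [ContinuousLinearMap.neg_apply, norm_neg]
    rw [e1, e2]
    have := hf1 v
    have := hf2 a
    simp only [map_neg]
    linarith
  have hid_bwd : ∀ a v : H,
      ‖(-T) v + Dp a‖ ^ 2 + ‖Dd v + adjoint T a‖ ^ 2 = ‖v‖ ^ 2 + ‖a‖ ^ 2 := by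
    intro a v
    rw [norm_add_sq (𝕜 := ℂ), norm_add_sq (𝕜 := ℂ)]
    have h3 := congrArg RCLike.re (hf3 a v)
    have e1 : (inner ℂ ((-T) v) (Dp a) : ℂ) = - inner ℂ (T v) (Dp a) := by
      rw [ContinuousLinearMap.neg_apply, inner_neg_left]
    have e2 : ‖(-T) v‖ = ‖T v‖ := by rw [ContinuousLinearMap.neg_apply, norm_neg]
    rw [e1, e2]
    have := hf1 v
    have := hf2 a
    simp only [map_neg]
    linarith
  -- inverse identities for the block maps
  have hli : ∀ ξ : K, blockAux (-T) Dp Dd (adjoint T)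
      (blockAux T Dp Dd (-adjoint T) ξ) = ξ := by
    intro ξ
    apply lp.ext; funext m
    by_cases h1 : m = -1
    · subst h1
      rw [blockAux_apply_neg_one, blockAux_apply_zero, blockAux_apply_neg_one]
      simp only [map_add, ContinuousLinearMap.neg_apply, map_neg]
      rw [← vTD, vPP]
      abel
    by_cases h0 : m = 0
    · subst h0
      rw [blockAux_apply_zero, blockAux_apply_zero, blockAux_apply_neg_one]
      simp only [map_add, ContinuousLinearMap.neg_apply, map_neg]
      rw [vDT, vDD]
      abel
    · rw [blockAux_apply_other _ _ _ _ _ h1 h0, blockAux_apply_other _ _ _ _ _ h1 h0]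
  have hri : ∀ ξ : K, blockAux T Dp Dd (-adjoint T)
      (blockAux (-T) Dp Dd (adjoint T) ξ) = ξ := by
    intro ξ
    apply lp.ext; funext m
    by_cases h1 : m = -1
    · subst h1
      rw [blockAux_apply_neg_one, blockAux_apply_zero, blockAux_apply_neg_one]
      simp only [map_add, ContinuousLinearMap.neg_apply, map_neg]
      rw [vTD, vPP]
      abel
    by_cases h0 : m = 0
    · subst h0
      rw [blockAux_apply_zero, blockAux_apply_zero, blockAux_apply_neg_one]
      simp only [map_add, ContinuousLinearMap.neg_apply, map_neg]
      rw [← vDT, vDD]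
      abel
    · rw [blockAux_apply_other _ _ _ _ _ h1 h0, blockAux_apply_other _ _ _ _ _ h1 h0]
  -- the unitary
  set BE := blockE T Dp Dd (-adjoint T) (-T) Dp Dd (adjoint T) hid_fwd hli hri with hBE
  set UE := BE.trans (shiftE (Equiv.subRight (1:ℤ))) with hUE
  set U : K →L[ℂ] K := (UE.toContinuousLinearEquiv : K →L[ℂ] K) with hU
  have hUapp : ∀ ξ : K, U ξ = UE ξ := fun ξ => rfl
  have hUcoord : ∀ (ξ : K) (m : ℤ), (U ξ) m = blockAux T Dp Dd (-adjoint T) ξ (m - 1) :=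
    fun ξ m => rfl
  have hinner : ∀ ξ η : K, (inner ℂ (U ξ) (U η) : ℂ) = inner ℂ ξ η := by
    intro ξ η
    rw [hUapp, hUapp, ← UE.coe_toLinearIsometry, LinearIsometry.inner_map_map]
  have hul : ContinuousLinearMap.adjoint U ∘L U = 1 := by
    refine ContinuousLinearMap.ext fun ξ => ?_
    refine ext_inner_right ℂ fun v => ?_
    rw [ContinuousLinearMap.comp_apply, ContinuousLinearMap.one_apply, adjoint_inner_left]
    exact hinner ξ v
  have hur : U ∘L ContinuousLinearMap.adjoint U = 1 := by
    refine ContinuousLinearMap.ext fun ξ => ?_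
    refine ext_inner_right ℂ fun v => ?_
    rw [ContinuousLinearMap.comp_apply, ContinuousLinearMap.one_apply]
    conv_lhs => rw [← UE.apply_symm_apply v]
    rw [← hUapp, hinner, adjoint_inner_left, hUapp, UE.apply_symm_apply]
  -- the dilation property
  have hkey : ∀ (n : ℕ) (x : H), (∀ m : ℤ, m < 0 → ((U ^ n) (embAux x) : K) m = 0) ∧
      ((U ^ n) (embAux x) : K) 0 = (T ^ n) x := by
    intro n x
    induction n with
    | zero =>
        constructor
        · intro m hm
          rw [pow_zero, ContinuousLinearMap.one_apply, embAux_apply,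
            lp.single_apply_ne 2 0 _ (by omega : m ≠ 0)]
        · rw [pow_zero, ContinuousLinearMap.one_apply, embAux_apply, lp.single_apply_self,
            pow_zero, ContinuousLinearMap.one_apply]
    | succ n ih =>
        have hstep : (U ^ (n+1)) (embAux x) = U ((U ^ n) (embAux x)) := by
          rw [pow_succ' U n, ContinuousLinearMap.mul_apply]
        constructor
        · intro m hm
          rw [hstep, hUcoord, blockAux_apply_other _ _ _ _ _ (by omega) (by omega)]
          exact ih.1 (m - 1) (by omega)
        · rw [hstep, hUcoord, show (0:ℤ) - 1 = -1 by norm_num, blockAux_apply_neg_one,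
            ih.2, ih.1 (-1) (by norm_num), map_zero, add_zero, pow_succ' T n,
            ContinuousLinearMap.mul_apply]
  refine ⟨{ K := K, emb := embAux, U := U, unitary_right := hur, unitary_left := hul,
            dilation := ?_ }⟩
  intro n x y
  have h1 : (embAux y : K) = lp.single 2 0 y := rfl
  rw [h1, lp.inner_single_right, (hkey n x).2]
end

section
/- (Lemma 2.1, unitary version) Let A, B be commuting isometries on H and let X̃ ∈ B(K̃) be a unitary extension of A. Then there exists a Hilbert space K ⊇ K̃ and commuting unitaries X, Y ∈ B(K) such that X extends X̃ and Y extends B. -/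
open ContinuousLinearMap

set_option linter.unusedSectionVars false
set_option maxHeartbeats 1000000

noncomputable section AuxiliaryCommutantLifting

local notation "⟪" x ", " y "⟫" => @inner ℂ _ _ x y

section LpHelpers

variable {G : Type} [NormedAddCommGroup G] [InnerProductSpace ℂ G]

lemma two_toReal_pos : 0 < (2 : ENNReal).toReal := by norm_num

lemma summable_norm_sq (f : lp (fun _ : ℕ => G) 2) :
    Summable fun n => ‖f n‖ ^ (2 : ENNReal).toReal :=
  (lp.memℓp f).summable two_toReal_pos

def lpTail (f : lp (fun _ : ℕ => G) 2) : lp (fun _ : ℕ => G) 2 :=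
  ⟨fun n => f (n + 1), memℓp_gen ((summable_norm_sq f).comp_injective (add_left_injective 1))⟩

@[simp] lemma lpTail_apply (f : lp (fun _ : ℕ => G) 2) (n : ℕ) : lpTail f n = f (n + 1) := rfl

def lpCons (d : G) (f : lp (fun _ : ℕ => G) 2) : lp (fun _ : ℕ => G) 2 :=
  ⟨fun n => Nat.casesOn n d fun k => f k, by
    apply memℓp_gen
    refine (summable_nat_add_iff 1).mp ?_
    simpa using summable_norm_sq f⟩

@[simp] lemma lpCons_zero (d : G) (f : lp (fun _ : ℕ => G) 2) : lpCons d f 0 = d := rfl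
@[simp] lemma lpCons_succ (d : G) (f : lp (fun _ : ℕ => G) 2) (n : ℕ) :
    lpCons d f (n + 1) = f n := rfl

lemma lpTail_cons (d : G) (f : lp (fun _ : ℕ => G) 2) : lpTail (lpCons d f) = f := by
  apply lp.ext; funext n; rfl

lemma lpCons_eta (f : lp (fun _ : ℕ => G) 2) : lpCons (f 0) (lpTail f) = f := by
  apply lp.ext; funext n; cases n <;> rfl

lemma lpTail_add (f g : lp (fun _ : ℕ => G) 2) : lpTail (f + g) = lpTail f + lpTail g := by
  apply lp.ext; funext n
  simp [lp.coeFn_add, lpTail_apply]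

lemma lpTail_smul (c : ℂ) (f : lp (fun _ : ℕ => G) 2) : lpTail (c • f) = c • lpTail f := by
  apply lp.ext; funext n
  simp [lp.coeFn_smul, lpTail_apply]

lemma lpCons_add (d d' : G) (f g : lp (fun _ : ℕ => G) 2) :
    lpCons (d + d') (f + g) = lpCons d f + lpCons d' g := by
  apply lp.ext; funext n
  cases n <;> simp [lp.coeFn_add]

lemma lpCons_smul (c : ℂ) (d : G) (f : lp (fun _ : ℕ => G) 2) :
    lpCons (c • d) (c • f) = c • lpCons d f := by
  apply lp.ext; funext n
  cases n <;> simp [lp.coeFn_smul]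

def lpMap (W : G ≃ₗᵢ[ℂ] G) (f : lp (fun _ : ℕ => G) 2) : lp (fun _ : ℕ => G) 2 :=
  ⟨fun n => W (f n), by
    apply memℓp_gen
    have : (fun n => ‖W (f n)‖ ^ (2 : ENNReal).toReal)
        = fun n => ‖f n‖ ^ (2 : ENNReal).toReal := by
      funext n; rw [W.norm_map]
    rw [this]; exact summable_norm_sq f⟩

@[simp] lemma lpMap_apply (W : G ≃ₗᵢ[ℂ] G) (f : lp (fun _ : ℕ => G) 2) (n : ℕ) :
    lpMap W f n = W (f n) := rfl

lemma lpMap_add (W : G ≃ₗᵢ[ℂ] G) (f g : lp (fun _ : ℕ => G) 2) :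
    lpMap W (f + g) = lpMap W f + lpMap W g := by
  apply lp.ext; funext n; simp [lp.coeFn_add]

lemma lpMap_smul (W : G ≃ₗᵢ[ℂ] G) (c : ℂ) (f : lp (fun _ : ℕ => G) 2) :
    lpMap W (c • f) = c • lpMap W f := by
  apply lp.ext; funext n; simp [lp.coeFn_smul]

lemma lpMap_symm_map (W : G ≃ₗᵢ[ℂ] G) (f : lp (fun _ : ℕ => G) 2) :
    lpMap W.symm (lpMap W f) = f := by
  apply lp.ext; funext n; simp

lemma lpMap_map_symm (W : G ≃ₗᵢ[ℂ] G) (f : lp (fun _ : ℕ => G) 2) :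
    lpMap W (lpMap W.symm f) = f := by
  apply lp.ext; funext n; simp

lemma inner_lpMap (W : G ≃ₗᵢ[ℂ] G) (f g : lp (fun _ : ℕ => G) 2) :
    ⟪lpMap W f, lpMap W g⟫ = ⟪f, g⟫ := by
  rw [lp.inner_eq_tsum, lp.inner_eq_tsum]
  congr 1; funext n
  exact W.inner_map_map _ _

lemma inner_eq_head_tail (f g : lp (fun _ : ℕ => G) 2) :
    ⟪f, g⟫ = ⟪f 0, g 0⟫ + ⟪lpTail f, lpTail g⟫ := by
  rw [lp.inner_eq_tsum, lp.inner_eq_tsum]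
  have h := (lp.summable_inner (𝕜 := ℂ) f g).tsum_eq_zero_add
  simp only [lpTail_apply]
  exact h

lemma lpMap_tail (W : G ≃ₗᵢ[ℂ] G) (f : lp (fun _ : ℕ => G) 2) :
    lpMap W (lpTail f) = lpTail (lpMap W f) := by
  apply lp.ext; funext n; rfl

lemma lpMap_zero (W : G ≃ₗᵢ[ℂ] G) : lpMap W 0 = 0 := by
  apply lp.ext; funext n; simp [lp.coeFn_zero]

lemma lpTail_zero : lpTail (0 : lp (fun _ : ℕ => G) 2) = 0 := by
  apply lp.ext; funext n; simp [lp.coeFn_zero]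

end LpHelpers

section Lie

variable {E : Type} [NormedAddCommGroup E] [InnerProductSpace ℂ E] [CompleteSpace E]

lemma adjoint_lie (W : E ≃ₗᵢ[ℂ] E) :
    adjoint W.toLinearIsometry.toContinuousLinearMap
      = W.symm.toLinearIsometry.toContinuousLinearMap := by
  ext x
  apply ext_inner_right ℂ
  intro y
  rw [adjoint_inner_left]
  simp only [LinearIsometry.coe_toContinuousLinearMap, LinearIsometryEquiv.coe_toLinearIsometry]
  calc ⟪x, W y⟫ = ⟪W (W.symm x), W y⟫ := by rw [W.apply_symm_apply]
  _ = ⟪W.symm x, y⟫ := W.inner_map_map _ _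

lemma lie_unitary_right (W : E ≃ₗᵢ[ℂ] E) :
    W.toLinearIsometry.toContinuousLinearMap ∘L adjoint W.toLinearIsometry.toContinuousLinearMap = 1 := by
  rw [adjoint_lie]; ext x; simp

lemma lie_unitary_left (W : E ≃ₗᵢ[ℂ] E) :
    adjoint W.toLinearIsometry.toContinuousLinearMap ∘L W.toLinearIsometry.toContinuousLinearMap = 1 := by
  rw [adjoint_lie]; ext x; simp

end Lie

structure CommUnitExt {Kt : Type}
    [NormedAddCommGroup Kt] [InnerProductSpace ℂ Kt] [CompleteSpace Kt]
    (U V : Kt →L[ℂ] Kt) where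
  K : Type
  [grp : NormedAddCommGroup K]
  [ips : InnerProductSpace ℂ K]
  [cpl : CompleteSpace K]
  emb : Kt →ₗᵢ[ℂ] K
  X : K →L[ℂ] K
  Y : K →L[ℂ] K
  hX1 : X ∘L adjoint X = 1
  hX2 : adjoint X ∘L X = 1
  hY1 : Y ∘L adjoint Y = 1
  hY2 : adjoint Y ∘L Y = 1
  comm : X ∘L Y = Y ∘L X
  hXe : ∀ z, X (emb z) = emb (U z)
  hYe : ∀ z, Y (emb z) = emb (V z)

variable {Kt : Type} [NormedAddCommGroup Kt] [InnerProductSpace ℂ Kt] [CompleteSpace Kt]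

theorem commUnitExt_exists (U V : Kt →L[ℂ] Kt)
    (hU1 : U ∘L adjoint U = 1) (hU2 : adjoint U ∘L U = 1)
    (hV : adjoint V ∘L V = 1) (hUV : U ∘L V = V ∘L U) :
    Nonempty (CommUnitExt U V) := by
  have hV' : ∀ x, adjoint V (V x) = x := by
    intro x
    have : (adjoint V ∘L V) x = (1 : Kt →L[ℂ] Kt) x := by rw [hV]
    simpa using this
  have hU1' : ∀ x, U (adjoint U x) = x := by
    intro x
    have : (U ∘L adjoint U) x = (1 : Kt →L[ℂ] Kt) x := by rw [hU1]
    simpa using this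
  have hU2' : ∀ x, adjoint U (U x) = x := by
    intro x
    have : (adjoint U ∘L U) x = (1 : Kt →L[ℂ] Kt) x := by rw [hU2]
    simpa using this
  have hUV' : ∀ x, U (V x) = V (U x) := by
    intro x
    have : (U ∘L V) x = (V ∘L U) x := by rw [hUV]
    simpa using this
  have inner_V : ∀ x y, ⟪V x, V y⟫ = ⟪x, y⟫ := by
    intro x y
    rw [← adjoint_inner_left, hV' x]
  have inner_U : ∀ x y, ⟪U x, U y⟫ = ⟪x, y⟫ := by
    intro x y
    rw [← adjoint_inner_left, hU2' x]
  have hUaV : ∀ x, adjoint U (V x) = V (adjoint U x) := by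
    intro x
    conv_lhs => rw [show x = U (adjoint U x) from (hU1' x).symm, ← hUV' (adjoint U x),
      hU2' (V (adjoint U x))]
  set R : Submodule ℂ Kt := LinearMap.range (V : Kt →ₗ[ℂ] Kt) with hR
  have hnormV : ∀ x, ‖V x‖ = ‖x‖ := by
    intro x
    rw [@norm_eq_sqrt_re_inner ℂ, @norm_eq_sqrt_re_inner ℂ, inner_V]
  have isomV : Isometry V := AddMonoidHomClass.isometry_of_norm V hnormV
  have hRc : IsClosed (R : Set Kt) := by
    have h1 : (R : Set Kt) = Set.range V := by
      ext x; simp [hR, LinearMap.mem_range]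
    rw [h1, ← Set.image_univ]
    exact ((isComplete_image_iff isomV.isUniformInducing).mpr
      (completeSpace_iff_isComplete_univ.mp ‹_›)).isClosed
  haveI : CompleteSpace R := hRc.completeSpace_coe
  set D : Submodule ℂ Kt := Rᗮ with hD
  haveI : CompleteSpace D := (Submodule.isClosed_orthogonal R).completeSpace_coe
  have hUR : ∀ x ∈ R, U x ∈ R := by
    rintro x ⟨y, rfl⟩
    exact ⟨U y, (hUV' y).symm⟩
  have hUaR : ∀ x ∈ R, adjoint U x ∈ R := by
    rintro x ⟨y, rfl⟩
    exact ⟨adjoint U y, (hUaV y).symm⟩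
  have hUD : ∀ x ∈ D, U x ∈ D := by
    intro x hx
    rw [hD, Submodule.mem_orthogonal]
    intro u hu
    rw [← adjoint_inner_left]
    exact hx _ (hUaR u hu)
  have hUaD : ∀ x ∈ D, adjoint U x ∈ D := by
    intro x hx
    rw [hD, Submodule.mem_orthogonal]
    intro u hu
    rw [adjoint_inner_right]
    exact hx _ (hUR u hu)
  let UDl : D →ₗ[ℂ] D := (U : Kt →ₗ[ℂ] Kt).restrict hUD
  let UDl' : D →ₗ[ℂ] D := (adjoint U : Kt →ₗ[ℂ] Kt).restrict hUaD
  let UDe : D ≃ₗ[ℂ] D := LinearEquiv.ofLinear UDl UDl'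
    (by ext x; exact hU1' x.1) (by ext x; exact hU2' x.1)
  let UD : D ≃ₗᵢ[ℂ] D := UDe.isometryOfInner (by
    intro x y
    exact inner_U x.1 y.1)
  have UD_coe : ∀ d : D, (UD d : Kt) = U d := fun d => rfl
  have UDsymm_coe : ∀ d : D, (UD.symm d : Kt) = adjoint U d := fun d => rfl
  -- facts about V, D
  have hVaD : ∀ d ∈ D, adjoint V d = 0 := by
    intro d hd
    apply ext_inner_right ℂ
    intro y
    rw [adjoint_inner_left, inner_zero_left]
    exact (Submodule.mem_orthogonal' R d).mp hd _ ⟨y, rfl⟩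
  have hmemR : ∀ x, V x ∈ R := fun x => ⟨x, rfl⟩
  have hPDV : ∀ x, D.orthogonalProjectionOnto (V x) = 0 := by
    intro x
    apply Submodule.orthogonalProjectionOnto_apply_of_mem_orthogonal
    exact Submodule.le_orthogonal_orthogonal R (hmemR x)
  have hVVa : ∀ η, V (adjoint V η) + (D.orthogonalProjectionOnto η : Kt) = η := by
    intro η
    have h1 : ((R.orthogonalProjectionOnto η : Kt)) = V (adjoint V η) := by
      apply Submodule.eq_starProjection_of_mem_of_inner_eq_zero (hmemR _)
      rintro w ⟨x, rfl⟩
      rw [ContinuousLinearMap.coe_coe, inner_sub_left, ← adjoint_inner_left V, inner_V, sub_self]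
    have h2 : (R.orthogonalProjectionOnto η : Kt) + (Rᗮ.orthogonalProjectionOnto η : Kt) = η :=
        Submodule.starProjection_add_starProjection_orthogonal (K := R) η
    rw [h1] at h2
    exact h2
  -- the big space
  let ld := lp (fun _ : ℕ => (D : Type)) 2
  let Kb := WithLp 2 (Kt × ld)
  let eqv := WithLp.equiv 2 (Kt × ld)
  -- Y
  let Yf : Kb → Kb := fun w => eqv.symm (V w.fst + ((w.snd 0 : D) : Kt), lpTail w.snd)
  let Yg : Kb → Kb := fun w => eqv.symm (adjoint V w.fst, lpCons (D.orthogonalProjectionOnto w.fst) w.snd)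
  have Yf_fst : ∀ w, (Yf w).fst = V w.fst + ((w.snd 0 : D) : Kt) := fun w => rfl
  have Yf_snd : ∀ w, (Yf w).snd = lpTail w.snd := fun w => rfl
  have prodext : ∀ w w' : Kb, w.fst = w'.fst → w.snd = w'.snd → w = w' := by
    intro w w' h1 h2
    apply eqv.injective
    apply Prod.ext
    · exact h1
    · exact h2
  let Ylin : Kb →ₗ[ℂ] Kb :=
    { toFun := Yf
      map_add' := by
        intro w w'
        apply prodext
        · show V (w + w').fst + ((((w + w').snd) 0 : D) : Kt)
            = (Yf w + Yf w').fst
          rw [WithLp.add_fst, WithLp.add_fst, WithLp.add_snd, Yf_fst, Yf_fst]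
          rw [lp.coeFn_add]
          simp only [Pi.add_apply, Submodule.coe_add, map_add]
          abel
        · show lpTail ((w + w').snd) = (Yf w + Yf w').snd
          rw [WithLp.add_snd, WithLp.add_snd, Yf_snd, Yf_snd, lpTail_add]
      map_smul' := by
        intro c w
        apply prodext
        · show V (c • w).fst + ((((c • w).snd) 0 : D) : Kt) = ((c • Yf w)).fst
          rw [WithLp.smul_fst, WithLp.smul_fst, WithLp.smul_snd, Yf_fst]
          rw [lp.coeFn_smul]
          simp only [Pi.smul_apply, Submodule.coe_smul, map_smul, smul_add]
        · show lpTail ((c • w).snd) = ((c • Yf w)).snd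
          rw [WithLp.smul_snd, WithLp.smul_snd, Yf_snd, lpTail_smul] }
  let Yglin : Kb →ₗ[ℂ] Kb :=
    { toFun := Yg
      map_add' := by
        intro w w'
        apply prodext
        · show adjoint V (w + w').fst = (Yg w + Yg w').fst
          rw [WithLp.add_fst, WithLp.add_fst, map_add]; rfl
        · show lpCons (D.orthogonalProjectionOnto (w + w').fst) ((w + w').snd)
            = (Yg w + Yg w').snd
          rw [WithLp.add_fst, WithLp.add_snd, WithLp.add_snd, map_add, lpCons_add]; rfl
      map_smul' := by
        intro c w
        apply prodext
        · show adjoint V (c • w).fst = ((c • Yg w)).fst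
          rw [WithLp.smul_fst, WithLp.smul_fst, map_smul]; rfl
        · show lpCons (D.orthogonalProjectionOnto (c • w).fst) ((c • w).snd)
            = ((c • Yg w)).snd
          rw [WithLp.smul_fst, WithLp.smul_snd, WithLp.smul_snd, map_smul, lpCons_smul]; rfl }
  let Yeq : Kb ≃ₗ[ℂ] Kb := LinearEquiv.ofLinear Ylin Yglin
    (by
      ext w
      show Yf (Yg w) = w
      apply prodext
      · show V (adjoint V w.fst) + ((lpCons (D.orthogonalProjectionOnto w.fst) w.snd 0 : D) : Kt)
          = w.fst
        rw [lpCons_zero]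
        exact hVVa w.fst
      · show lpTail (lpCons (D.orthogonalProjectionOnto w.fst) w.snd) = w.snd
        exact lpTail_cons _ _)
    (by
      ext w
      show Yg (Yf w) = w
      apply prodext
      · show adjoint V (V w.fst + ((w.snd 0 : D) : Kt)) = w.fst
        rw [map_add, hV', hVaD _ (w.snd 0).2, add_zero]
      · show lpCons (D.orthogonalProjectionOnto (V w.fst + ((w.snd 0 : D) : Kt))) (lpTail w.snd)
          = w.snd
        rw [map_add, hPDV, Submodule.orthogonalProjectionOnto_mem_subspace_eq_self, zero_add]
        exact lpCons_eta w.snd)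
  have hinnY : ∀ w w' : Kb, ⟪Yeq w, Yeq w'⟫ = ⟪w, w'⟫ := by
    intro w w'
    have hYeq : ∀ u : Kb, Yeq u = Yf u := fun u => rfl
    rw [hYeq, hYeq, WithLp.prod_inner_apply, WithLp.prod_inner_apply]
    simp only [WithLp.ofLp_fst, WithLp.ofLp_snd]
    rw [Yf_fst, Yf_fst, Yf_snd, Yf_snd]
    have hz1 : ⟪V w.fst, ((w'.snd 0 : D) : Kt)⟫ = 0 :=
      (Submodule.mem_orthogonal R _).mp (w'.snd 0).2 _ (hmemR w.fst)
    have hz2 : ⟪((w.snd 0 : D) : Kt), V w'.fst⟫ = 0 :=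
      (Submodule.mem_orthogonal' R _).mp (w.snd 0).2 _ (hmemR w'.fst)
    rw [inner_add_left, inner_add_right, inner_add_right, hz1, hz2, inner_V,
      add_zero, zero_add, inner_eq_head_tail w.snd w'.snd]
    rw [show ⟪((w.snd 0 : D) : Kt), ((w'.snd 0 : D) : Kt)⟫ = ⟪w.snd 0, w'.snd 0⟫ from rfl]
    ring
  let Ylie : Kb ≃ₗᵢ[ℂ] Kb := Yeq.isometryOfInner hinnY
  let Y : Kb →L[ℂ] Kb := Ylie.toLinearIsometry.toContinuousLinearMap
  have Y_apply : ∀ w, Y w = Yf w := fun w => rfl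
  -- X
  let Xf : Kb → Kb := fun w => eqv.symm (U w.fst, lpMap UD w.snd)
  let Xg : Kb → Kb := fun w => eqv.symm (adjoint U w.fst, lpMap UD.symm w.snd)
  let Xlin : Kb →ₗ[ℂ] Kb :=
    { toFun := Xf
      map_add' := by
        intro w w'
        apply prodext
        · show U (w + w').fst = (Xf w + Xf w').fst
          rw [WithLp.add_fst, WithLp.add_fst, map_add]; rfl
        · show lpMap UD ((w + w').snd) = (Xf w + Xf w').snd
          rw [WithLp.add_snd, WithLp.add_snd, lpMap_add]; rfl
      map_smul' := by
        intro c w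
        apply prodext
        · show U (c • w).fst = ((c • Xf w)).fst
          rw [WithLp.smul_fst, WithLp.smul_fst, map_smul]; rfl
        · show lpMap UD ((c • w).snd) = ((c • Xf w)).snd
          rw [WithLp.smul_snd, WithLp.smul_snd, lpMap_smul]; rfl }
  let Xglin : Kb →ₗ[ℂ] Kb :=
    { toFun := Xg
      map_add' := by
        intro w w'
        apply prodext
        · show adjoint U (w + w').fst = (Xg w + Xg w').fst
          rw [WithLp.add_fst, WithLp.add_fst, map_add]; rfl
        · show lpMap UD.symm ((w + w').snd) = (Xg w + Xg w').snd
          rw [WithLp.add_snd, WithLp.add_snd, lpMap_add]; rfl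
      map_smul' := by
        intro c w
        apply prodext
        · show adjoint U (c • w).fst = ((c • Xg w)).fst
          rw [WithLp.smul_fst, WithLp.smul_fst, map_smul]; rfl
        · show lpMap UD.symm ((c • w).snd) = ((c • Xg w)).snd
          rw [WithLp.smul_snd, WithLp.smul_snd, lpMap_smul]; rfl }
  let Xeq : Kb ≃ₗ[ℂ] Kb := LinearEquiv.ofLinear Xlin Xglin
    (by
      ext w
      show Xf (Xg w) = w
      apply prodext
      · exact hU1' w.fst
      · exact lpMap_map_symm UD w.snd)
    (by
      ext w
      show Xg (Xf w) = w
      apply prodext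
      · exact hU2' w.fst
      · exact lpMap_symm_map UD w.snd)
  have hinnX : ∀ w w' : Kb, ⟪Xeq w, Xeq w'⟫ = ⟪w, w'⟫ := by
    intro w w'
    have hXeq : ∀ u : Kb, Xeq u = Xf u := fun u => rfl
    rw [hXeq, hXeq, WithLp.prod_inner_apply, WithLp.prod_inner_apply]
    simp only [WithLp.ofLp_fst, WithLp.ofLp_snd]
    rw [show (Xf w).fst = U w.fst from rfl, show (Xf w').fst = U w'.fst from rfl,
      show (Xf w).snd = lpMap UD w.snd from rfl, show (Xf w').snd = lpMap UD w'.snd from rfl]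
    rw [inner_U, inner_lpMap]
  let Xlie : Kb ≃ₗᵢ[ℂ] Kb := Xeq.isometryOfInner hinnX
  let X : Kb →L[ℂ] Kb := Xlie.toLinearIsometry.toContinuousLinearMap
  have X_apply : ∀ w, X w = Xf w := fun w => rfl
  -- commutation
  have comm : X ∘L Y = Y ∘L X := by
    ext w
    rw [ContinuousLinearMap.comp_apply, ContinuousLinearMap.comp_apply,
      X_apply, Y_apply, X_apply, Y_apply]
    apply prodext
    · show U (V w.fst + ((w.snd 0 : D) : Kt)) = V (U w.fst) + ((lpMap UD w.snd 0 : D) : Kt)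
      rw [map_add, hUV', lpMap_apply, UD_coe]
    · show lpMap UD (lpTail w.snd) = lpTail (lpMap UD w.snd)
      exact lpMap_tail UD w.snd
  -- the embedding
  let embl : Kt →ₗ[ℂ] Kb :=
    ((WithLp.linearEquiv 2 ℂ (Kt × ld)).symm : (Kt × ld) ≃ₗ[ℂ] Kb).toLinearMap.comp
      (LinearMap.inl ℂ Kt ld)
  have embl_fst : ∀ z, (embl z).fst = z := fun z => rfl
  have embl_snd : ∀ z, (embl z).snd = 0 := fun z => rfl
  let emb : Kt →ₗᵢ[ℂ] Kb := embl.isometryOfInner (by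
    intro x y
    rw [WithLp.prod_inner_apply]
    simp only [WithLp.ofLp_fst, WithLp.ofLp_snd]
    rw [embl_fst, embl_fst, embl_snd, embl_snd,
      inner_zero_left, add_zero])
  have emb_apply : ∀ z, emb z = embl z := fun z => rfl
  have hXe : ∀ z, X (emb z) = emb (U z) := by
    intro z
    rw [emb_apply, X_apply, emb_apply]
    apply prodext
    · rfl
    · show lpMap UD ((embl z).snd) = (embl (U z)).snd
      rw [embl_snd, embl_snd, lpMap_zero]
  have hYe : ∀ z, Y (emb z) = emb (V z) := by
    intro z
    rw [emb_apply, Y_apply, emb_apply]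
    apply prodext
    · show V (embl z).fst + (((embl z).snd 0 : D) : Kt) = (embl (V z)).fst
      rw [embl_fst, embl_fst, embl_snd]
      rw [show ((0 : ld) 0) = (0 : D) from rfl]
      rw [Submodule.coe_zero, add_zero]
    · show lpTail ((embl z).snd) = (embl (V z)).snd
      rw [embl_snd, embl_snd, lpTail_zero]
  exact ⟨{ K := Kb, emb := emb, X := X, Y := Y,
           hX1 := lie_unitary_right Xlie, hX2 := lie_unitary_left Xlie,
           hY1 := lie_unitary_right Ylie, hY2 := lie_unitary_left Ylie,
           comm := comm, hXe := hXe, hYe := hYe }⟩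



variable {H Kt : Type}
    [NormedAddCommGroup H] [InnerProductSpace ℂ H] [CompleteSpace H]
    [NormedAddCommGroup Kt] [InnerProductSpace ℂ Kt] [CompleteSpace Kt]

theorem isometry_extension (A B : H →L[ℂ] H)
    (hB : ContinuousLinearMap.adjoint B ∘L B = 1)
    (hAB : A ∘L B = B ∘L A)
    (e : H →ₗᵢ[ℂ] Kt) (Xt : Kt →L[ℂ] Kt)
    (hXt_right : Xt ∘L ContinuousLinearMap.adjoint Xt = 1)
    (hXt_left : ContinuousLinearMap.adjoint Xt ∘L Xt = 1)
    (hXtA : ∀ x : H, Xt (e x) = e (A x)) :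
    ∃ V : Kt →L[ℂ] Kt, (adjoint V ∘L V = 1) ∧ (Xt ∘L V = V ∘L Xt) ∧
      ∀ x : H, V (e x) = e (B x) := by
  set Q : Kt →L[ℂ] Kt := adjoint Xt with hQdef
  have hXQ : ∀ x, Xt (Q x) = x := by
    intro x
    have : (Xt ∘L Q) x = (1 : Kt →L[ℂ] Kt) x := by rw [hXt_right]
    simpa using this
  have hQX : ∀ x, Q (Xt x) = x := by
    intro x
    have : (Q ∘L Xt) x = (1 : Kt →L[ℂ] Kt) x := by rw [hXt_left]
    simpa using this
  have hAB' : ∀ h, A (B h) = B (A h) := by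
    intro h
    have : (A ∘L B) h = (B ∘L A) h := by rw [hAB]
    simpa using this
  have inner_B : ∀ x y, ⟪B x, B y⟫ = ⟪x, y⟫ := by
    intro x y
    rw [← adjoint_inner_left]
    have : adjoint B (B x) = x := by
      have : (adjoint B ∘L B) x = (1 : H →L[ℂ] H) x := by rw [hB]
      simpa using this
    rw [this]
  have inner_Q : ∀ x y, ⟪Q x, Q y⟫ = ⟪x, y⟫ := by
    intro x y
    rw [hQdef, adjoint_inner_left, hXQ]
  have hQsucc : ∀ (n : ℕ) (x : Kt), (Q ^ (n + 1)) x = Q ((Q ^ n) x) := by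
    intro n x
    rw [pow_succ']
    rfl
  have hQsucc' : ∀ (n : ℕ) (x : Kt), (Q ^ (n + 1)) x = (Q ^ n) (Q x) := by
    intro n x
    rw [pow_succ]
    rfl
  have hXtpow : ∀ (n : ℕ) (h : H), (Xt ^ n) (e h) = e ((A ^ n) h) := by
    intro n
    induction n with
    | zero => intro h; simp
    | succ k ih =>
      intro h
      have h1 : (Xt ^ (k + 1)) (e h) = Xt ((Xt ^ k) (e h)) := by rw [pow_succ']; rfl
      have h2 : (A ^ (k + 1)) h = A ((A ^ k) h) := by rw [pow_succ']; rfl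
      rw [h1, h2, ih, hXtA]
  have hXtQpow : ∀ (n : ℕ) (x : Kt), Xt ((Q ^ (n + 1)) x) = (Q ^ n) x := by
    intro n x
    rw [hQsucc, hXQ]
  have hQpow_inner : ∀ (n : ℕ) (x y : Kt), ⟪(Q ^ n) x, (Q ^ n) y⟫ = ⟪x, y⟫ := by
    intro n
    induction n with
    | zero => intro x y; simp
    | succ k ih =>
      intro x y
      rw [hQsucc' k x, hQsucc' k y, ih, inner_Q]
  have hQk_left : ∀ (k : ℕ) (x y : Kt), ⟪(Q ^ k) x, y⟫ = ⟪x, (Xt ^ k) y⟫ := by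
    intro k
    induction k with
    | zero => intro x y; simp
    | succ k ih =>
      intro x y
      have h1 : (Xt ^ (k + 1)) y = (Xt ^ k) (Xt y) := by rw [pow_succ]; rfl
      rw [hQsucc, hQdef, adjoint_inner_left, ih, h1]
  have hApowB : ∀ (k : ℕ) (h : H), (A ^ k) (B h) = B ((A ^ k) h) := by
    intro k
    induction k with
    | zero => intro h; simp
    | succ k ih =>
      intro h
      have h1 : ∀ z : H, (A ^ (k + 1)) z = A ((A ^ k) z) := by
        intro z; rw [pow_succ']; rfl
      rw [h1, h1, ih, hAB']
  -- base pairing identity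
  have base : ∀ (k : ℕ) (a b : H),
      ⟪(Q ^ k) (e (B a)), e (B b)⟫ = ⟪(Q ^ k) (e a), e b⟫ := by
    intro k a b
    rw [hQk_left, hQk_left, hXtpow, hXtpow, e.inner_map_map, e.inner_map_map,
      hApowB, inner_B]
  have key : ∀ (n m : ℕ) (a b : H),
      ⟪(Q ^ n) (e (B a)), (Q ^ m) (e (B b))⟫ = ⟪(Q ^ n) (e a), (Q ^ m) (e b)⟫ := by
    intro n m a b
    rcases le_total m n with hle | hle
    · obtain ⟨k, rfl⟩ := Nat.exists_eq_add_of_le hle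
      have hsplit : ∀ x : Kt, (Q ^ (m + k)) x = (Q ^ m) ((Q ^ k) x) := by
        intro x; rw [pow_add]; rfl
      rw [hsplit, hsplit, hQpow_inner, hQpow_inner, base]
    · obtain ⟨k, rfl⟩ := Nat.exists_eq_add_of_le hle
      have hsplit : ∀ x : Kt, (Q ^ (n + k)) x = (Q ^ n) ((Q ^ k) x) := by
        intro x; rw [pow_add]; rfl
      rw [hsplit, hsplit, hQpow_inner, hQpow_inner]
      calc ⟪e (B a), (Q ^ k) (e (B b))⟫
          = (starRingEnd ℂ) ⟪(Q ^ k) (e (B b)), e (B a)⟫ := (inner_conj_symm _ _).symm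
        _ = (starRingEnd ℂ) ⟪(Q ^ k) (e b), e a⟫ := by rw [base]
        _ = ⟪e a, (Q ^ k) (e b)⟫ := inner_conj_symm _ _
  -- the formal sum maps
  set T : (ℕ →₀ H) →ₗ[ℂ] Kt :=
    Finsupp.lsum ℂ (fun n => ((Q ^ n : Kt →L[ℂ] Kt) : Kt →ₗ[ℂ] Kt) ∘ₗ e.toLinearMap) with hTdef
  set S : (ℕ →₀ H) →ₗ[ℂ] Kt :=
    Finsupp.lsum ℂ (fun n => ((Q ^ n : Kt →L[ℂ] Kt) : Kt →ₗ[ℂ] Kt) ∘ₗ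
      (e.toLinearMap ∘ₗ (B : H →ₗ[ℂ] H))) with hSdef
  have T_single : ∀ (n : ℕ) (h : H), T (Finsupp.single n h) = (Q ^ n) (e h) := by
    intro n h; simp [hTdef, Module.End.pow_apply]
  have S_single : ∀ (n : ℕ) (h : H), S (Finsupp.single n h) = (Q ^ n) (e (B h)) := by
    intro n h; simp [hSdef, Module.End.pow_apply]
  have T_apply : ∀ f : ℕ →₀ H, T f = ∑ n ∈ f.support, (Q ^ n) (e (f n)) := by
    intro f
    rw [hTdef, Finsupp.lsum_apply]
    rfl
  have S_apply : ∀ f : ℕ →₀ H, S f = ∑ n ∈ f.support, (Q ^ n) (e (B (f n))) := by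
    intro f
    rw [hSdef, Finsupp.lsum_apply]
    rfl
  have inner_TS : ∀ f g : ℕ →₀ H, ⟪S f, S g⟫ = ⟪T f, T g⟫ := by
    intro f g
    rw [T_apply, T_apply, S_apply, S_apply, sum_inner, sum_inner]
    refine Finset.sum_congr rfl fun n _ => ?_
    rw [inner_sum, inner_sum]
    exact Finset.sum_congr rfl fun m _ => key n m (f n) (g m)
  have hkerTS : ∀ f : ℕ →₀ H, T f = 0 → S f = 0 := by
    intro f hf
    have h1 : ⟪S f, S f⟫ = 0 := by rw [inner_TS, hf, inner_zero_left]
    exact inner_self_eq_zero.mp h1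
  -- factor S through the range of T
  set M : Submodule ℂ Kt := LinearMap.range T with hMdef
  have ker_le : LinearMap.ker T ≤ LinearMap.ker S := by
    intro f hf
    rw [LinearMap.mem_ker] at hf ⊢
    exact hkerTS f hf
  let V₀ : M →ₗ[ℂ] Kt :=
    ((LinearMap.ker T).liftQ S ker_le) ∘ₗ (T.quotKerEquivRange.symm : M ≃ₗ[ℂ] _).toLinearMap
  have V₀_apply : ∀ f : ℕ →₀ H, V₀ ⟨T f, LinearMap.mem_range_self T f⟩ = S f := by
    intro f
    show ((LinearMap.ker T).liftQ S ker_le)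
      ((T.quotKerEquivRange.symm) ⟨T f, LinearMap.mem_range_self T f⟩) = S f
    rw [T.quotKerEquivRange_symm_apply_image, Submodule.mkQ_apply, Submodule.liftQ_apply]
  have inner_V₀ : ∀ u v : M, ⟪V₀ u, V₀ v⟫ = ⟪(u : Kt), (v : Kt)⟫ := by
    rintro ⟨_, ⟨f, rfl⟩⟩ ⟨_, ⟨g, rfl⟩⟩
    rw [V₀_apply, V₀_apply, inner_TS]
  let VM : M →ₗᵢ[ℂ] Kt := V₀.isometryOfInner (fun u v => inner_V₀ u v)
  have VM_apply : ∀ u : M, VM u = V₀ u := fun u => rfl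
  -- the closure L of M
  set L : Submodule ℂ Kt := M.topologicalClosure with hLdef
  haveI : CompleteSpace L := M.isClosed_topologicalClosure.completeSpace_coe
  let li : M →ₗᵢ[ℂ] L := ⟨Submodule.inclusion M.le_topologicalClosure, fun x => rfl⟩
  let incl : M →L[ℂ] L := li.toContinuousLinearMap
  have incl_apply : ∀ u : M, ((incl u : L) : Kt) = (u : Kt) := fun u => rfl
  have hdense : DenseRange incl := by
    have himg : (Subtype.val '' Set.range incl) = (M : Set Kt) := by
      ext x
      constructor
      · rintro ⟨y, ⟨m, rfl⟩, rfl⟩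
        exact m.2
      · intro hx
        exact ⟨⟨x, M.le_topologicalClosure hx⟩, ⟨⟨x, hx⟩, rfl⟩, rfl⟩
    intro y
    show y ∈ closure (Set.range incl)
    rw [closure_subtype, himg]
    exact y.2
  let VL : L →L[ℂ] Kt :=
    ContinuousLinearMap.extend VM.toContinuousLinearMap incl
  have VL_eq : ∀ u : M, VL (incl u) = V₀ u := by
    intro u
    exact ContinuousLinearMap.extend_eq _ hdense li.isometry.isUniformInducing u
  have dense_ind : ∀ (p : L → Prop), IsClosed {z | p z} → (∀ u : M, p (incl u)) →
      ∀ z : L, p z := by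
    intro p hc hu z
    exact hdense.induction_on z hc hu
  have hVLnorm : ∀ z : L, ‖VL z‖ = ‖z‖ := by
    refine dense_ind _ (isClosed_eq VL.continuous.norm continuous_subtype_val.norm) ?_
    intro u
    rw [VL_eq]
    have h1 : ‖V₀ u‖ = ‖u‖ := (V₀.isometryOfInner (fun u v => inner_V₀ u v)).norm_map u
    rw [h1]
    rfl
  let VLi : L →ₗᵢ[ℂ] Kt := ⟨(VL : L →ₗ[ℂ] Kt), hVLnorm⟩
  have inner_VL : ∀ z w : L, ⟪VL z, VL w⟫ = ⟪(z : Kt), (w : Kt)⟫ := by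
    intro z w
    exact VLi.inner_map_map z w
  -- S maps into the range of T
  have hST : S = T ∘ₗ (Finsupp.mapRange.linearMap (B : H →ₗ[ℂ] H)) := by
    apply Finsupp.lhom_ext
    intro n h
    rw [LinearMap.comp_apply, Finsupp.mapRange.linearMap_apply,
      Finsupp.mapRange_single, T_single, S_single]
    rfl
  have hSM : ∀ f : ℕ →₀ H, S f ∈ M := by
    intro f
    rw [hST]
    exact LinearMap.mem_range_self T _
  have hVLmem : ∀ z : L, VL z ∈ L := by
    refine dense_ind _ (M.isClosed_topologicalClosure.preimage VL.continuous) ?_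
    intro u
    rw [VL_eq]
    obtain ⟨f, hf⟩ := u.2
    have hu : u = ⟨T f, LinearMap.mem_range_self T f⟩ := Subtype.ext hf.symm
    rw [hu, V₀_apply]
    exact M.le_topologicalClosure (hSM f)
  -- the shift map on formal sums
  let σ : (ℕ →₀ H) →ₗ[ℂ] (ℕ →₀ H) :=
    Finsupp.lsum ℂ (fun n => Nat.casesOn n (Finsupp.lsingle 0 ∘ₗ (A : H →ₗ[ℂ] H))
      (fun k => Finsupp.lsingle k))
  have σ_single_zero : ∀ h : H, σ (Finsupp.single 0 h) = Finsupp.single 0 (A h) := by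
    intro h; simp [σ]
  have σ_single_succ : ∀ (k : ℕ) (h : H),
      σ (Finsupp.single (k + 1) h) = Finsupp.single k h := by
    intro k h; simp [σ]
  have hTσ : ∀ f, Xt (T f) = T (σ f) := by
    have : (Xt : Kt →ₗ[ℂ] Kt) ∘ₗ T = T ∘ₗ σ := by
      apply Finsupp.lhom_ext
      intro n h
      rw [LinearMap.comp_apply, LinearMap.comp_apply]
      cases n with
      | zero =>
        rw [σ_single_zero, T_single, T_single]
        show Xt ((Q ^ 0) (e h)) = (Q ^ 0) (e (A h))
        simp [hXtA]
      | succ k =>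
        rw [σ_single_succ, T_single, T_single]
        show Xt ((Q ^ (k + 1)) (e h)) = (Q ^ k) (e h)
        exact hXtQpow k (e h)
    intro f
    exact congrArg (fun φ => φ f) this
  have hSσ : ∀ f, Xt (S f) = S (σ f) := by
    have : (Xt : Kt →ₗ[ℂ] Kt) ∘ₗ S = S ∘ₗ σ := by
      apply Finsupp.lhom_ext
      intro n h
      rw [LinearMap.comp_apply, LinearMap.comp_apply]
      cases n with
      | zero =>
        rw [σ_single_zero, S_single, S_single]
        show Xt ((Q ^ 0) (e (B h))) = (Q ^ 0) (e (B (A h)))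
        simp [hXtA, hAB']
      | succ k =>
        rw [σ_single_succ, S_single, S_single]
        show Xt ((Q ^ (k + 1)) (e (B h))) = (Q ^ k) (e (B h))
        exact hXtQpow k (e (B h))
    intro f
    exact congrArg (fun φ => φ f) this
  -- shift in the other direction: Q maps M to M
  let τ : (ℕ →₀ H) →ₗ[ℂ] (ℕ →₀ H) := Finsupp.lsum ℂ (fun n => Finsupp.lsingle (n + 1))
  have hTτ : ∀ f, Q (T f) = T (τ f) := by
    have : (Q : Kt →ₗ[ℂ] Kt) ∘ₗ T = T ∘ₗ τ := by
      apply Finsupp.lhom_ext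
      intro n h
      rw [LinearMap.comp_apply, LinearMap.comp_apply]
      have : τ (Finsupp.single n h) = Finsupp.single (n + 1) h := by simp [τ]
      rw [this, T_single, T_single]
      show Q ((Q ^ n) (e h)) = (Q ^ (n + 1)) (e h)
      rw [hQsucc]
    intro f
    exact congrArg (fun φ => φ f) this
  have hXtM : ∀ x ∈ M, Xt x ∈ M := by
    rintro _ ⟨f, rfl⟩
    exact ⟨σ f, (hTσ f).symm⟩
  have hQM : ∀ x ∈ M, Q x ∈ M := by
    rintro _ ⟨f, rfl⟩
    exact ⟨τ f, (hTτ f).symm⟩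
  have mapsClosure : ∀ (φ : Kt →L[ℂ] Kt), (∀ x ∈ M, φ x ∈ M) → ∀ x ∈ L, φ x ∈ L := by
    intro φ hφ x hx
    have h1 : φ '' (M : Set Kt) ⊆ (M : Set Kt) := by
      rintro _ ⟨y, hy, rfl⟩
      exact hφ y hy
    have h2 : φ x ∈ φ '' closure (M : Set Kt) := ⟨x, hx, rfl⟩
    have h3 := image_closure_subset_closure_image φ.continuous h2
    exact closure_mono h1 h3
  have hXtL : ∀ x ∈ L, Xt x ∈ L := mapsClosure Xt hXtM
  have hQL : ∀ x ∈ L, Q x ∈ L := mapsClosure Q hQM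
  have hXtLperp : ∀ x ∈ Lᗮ, Xt x ∈ Lᗮ := by
    intro x hx
    rw [Submodule.mem_orthogonal]
    intro u hu
    rw [← adjoint_inner_left]
    exact hx _ (hQL u hu)
  -- the orthogonal projection onto L
  let P : Kt →L[ℂ] L := L.orthogonalProjectionOnto
  let Pc : Kt →L[ℂ] Kt := L.subtypeL ∘L P
  have hPc : ∀ x, Pc x = ((P x : L) : Kt) := fun x => rfl
  have hPmem : ∀ x, Pc x ∈ L := fun x => (P x).2
  have hPcomm : ∀ x, ((P (Xt x) : L) : Kt) = Xt ((P x : L) : Kt) := by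
    intro x
    apply Submodule.eq_starProjection_of_mem_orthogonal (hXtL _ (P x).2)
    have h1 : Xt x - Xt ((P x : L) : Kt) = Xt (x - ((P x : L) : Kt)) := by
      rw [map_sub]
    rw [h1]
    exact hXtLperp _ (Submodule.sub_starProjection_mem_orthogonal x)
  -- Xt restricted to L
  let XtL : L →L[ℂ] L := (Xt ∘L L.subtypeL).codRestrict L (fun z => hXtL _ z.2)
  have XtL_apply : ∀ z : L, ((XtL z : L) : Kt) = Xt (z : Kt) := fun z => rfl
  have hVcomm' : ∀ z : L, Xt (VL z) = VL (XtL z) := by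
    refine dense_ind _ (isClosed_eq (Xt.continuous.comp VL.continuous)
      (VL.continuous.comp XtL.continuous)) ?_
    intro u
    obtain ⟨f, hf⟩ := u.2
    have hu : u = ⟨T f, LinearMap.mem_range_self T f⟩ := Subtype.ext hf.symm
    rw [hu, VL_eq, V₀_apply, hSσ]
    have h1 : XtL (incl ⟨T f, LinearMap.mem_range_self T f⟩)
        = incl ⟨T (σ f), LinearMap.mem_range_self T (σ f)⟩ := by
      apply Subtype.ext
      show Xt (T f) = T (σ f)
      exact hTσ f
    rw [h1, VL_eq, V₀_apply]
  -- the isometry V on all of Kt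
  let V : Kt →L[ℂ] Kt := (VL ∘L P) + (1 - Pc)
  have hV_apply : ∀ x, V x = VL (P x) + (x - Pc x) := by
    intro x
    simp [V, ContinuousLinearMap.add_apply, ContinuousLinearMap.sub_apply,
      ContinuousLinearMap.one_apply, ContinuousLinearMap.comp_apply]
  have hsub_perp : ∀ x, x - Pc x ∈ Lᗮ := fun x => Submodule.sub_starProjection_mem_orthogonal x
  have hinner : ∀ x y, ⟪V x, V y⟫ = ⟪x, y⟫ := by
    intro x y
    rw [hV_apply, hV_apply]
    have hVPx : VL (P x) ∈ L := hVLmem (P x)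
    have hVPy : VL (P y) ∈ L := hVLmem (P y)
    have hz1 : ⟪VL (P x), y - Pc y⟫ = 0 :=
      (Submodule.mem_orthogonal L _).mp (hsub_perp y) _ hVPx
    have hz2 : ⟪x - Pc x, VL (P y)⟫ = 0 :=
      (Submodule.mem_orthogonal' L _).mp (hsub_perp x) _ hVPy
    have hz3 : ⟪Pc x, y - Pc y⟫ = 0 :=
      (Submodule.mem_orthogonal L _).mp (hsub_perp y) _ (hPmem x)
    have hz4 : ⟪x - Pc x, Pc y⟫ = 0 :=
      (Submodule.mem_orthogonal' L _).mp (hsub_perp x) _ (hPmem y)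
    have hmain : ⟪VL (P x), VL (P y)⟫ = ⟪Pc x, Pc y⟫ := inner_VL (P x) (P y)
    rw [inner_add_left, inner_add_right, inner_add_right, hz1, hz2, hmain]
    conv_rhs => rw [show x = Pc x + (x - Pc x) by abel, show y = Pc y + (y - Pc y) by abel]
    rw [inner_add_left, inner_add_right, inner_add_right, hz3, hz4]
    try ring
  have hVadj : adjoint V ∘L V = 1 := by
    ext x
    apply ext_inner_right ℂ
    intro y
    rw [ContinuousLinearMap.comp_apply, adjoint_inner_left, hinner,
      ContinuousLinearMap.one_apply]
  have hVcomm : Xt ∘L V = V ∘L Xt := by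
    ext x
    rw [ContinuousLinearMap.comp_apply, ContinuousLinearMap.comp_apply,
      hV_apply, hV_apply, map_add, map_sub]
    have h1 : Xt (VL (P x)) = VL (P (Xt x)) := by
      rw [hVcomm' (P x)]
      congr 1
      apply Subtype.ext
      rw [XtL_apply]
      exact (hPcomm x).symm
    have h2 : Xt (Pc x) = Pc (Xt x) := by
      rw [hPc, hPc, ← hPcomm]
    rw [h1, h2]
  have hVe : ∀ h : H, V (e h) = e (B h) := by
    intro h
    have hTh : T (Finsupp.single 0 h) = e h := by
      rw [T_single]
      show (Q ^ 0) (e h) = e h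
      simp
    have hMem : e h ∈ M := ⟨Finsupp.single 0 h, hTh⟩
    have hMemL : e h ∈ L := M.le_topologicalClosure hMem
    have hPe : P (e h) = ⟨e h, hMemL⟩ :=
      Submodule.orthogonalProjectionOnto_mem_subspace_eq_self (⟨e h, hMemL⟩ : L)
    have hPce : Pc (e h) = e h := by rw [hPc, hPe]
    rw [hV_apply, hPce, sub_self, add_zero, hPe]
    have h2 : (⟨e h, hMemL⟩ : L) = incl ⟨e h, hMem⟩ := Subtype.ext rfl
    rw [h2, VL_eq]
    have h3 : (⟨e h, hMem⟩ : M) = ⟨T (Finsupp.single 0 h), LinearMap.mem_range_self T _⟩ :=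
      Subtype.ext hTh.symm
    rw [h3, V₀_apply, S_single]
    show (Q ^ 0) (e (B h)) = e (B h)
    simp
  exact ⟨V, hVadj, hVcomm, hVe⟩

end AuxiliaryCommutantLifting

/-- Data witnessing the unitary version of the weak commutant lifting lemma: a Hilbert
space `K ⊇ K̃` with commuting unitaries `X, Y` such that `X` extends `X̃` and `Y`
extends `B`. -/
structure UnitaryCommutantLift {H Kt : Type}
    [NormedAddCommGroup H] [InnerProductSpace ℂ H] [CompleteSpace H]
    [NormedAddCommGroup Kt] [InnerProductSpace ℂ Kt] [CompleteSpace Kt]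
    (B : H →L[ℂ] H) (e : H →ₗᵢ[ℂ] Kt) (Xt : Kt →L[ℂ] Kt) where
  K : Type
  [grp : NormedAddCommGroup K]
  [ips : InnerProductSpace ℂ K]
  [cpl : CompleteSpace K]
  emb : Kt →ₗᵢ[ℂ] K
  X : K →L[ℂ] K
  Y : K →L[ℂ] K
  X_unitary_right : X ∘L ContinuousLinearMap.adjoint X = 1
  X_unitary_left : ContinuousLinearMap.adjoint X ∘L X = 1
  Y_unitary_right : Y ∘L ContinuousLinearMap.adjoint Y = 1
  Y_unitary_left : ContinuousLinearMap.adjoint Y ∘L Y = 1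
  commute : X ∘L Y = Y ∘L X
  X_extends : ∀ z : Kt, X (emb z) = emb (Xt z)
  Y_extends : ∀ x : H, Y (emb (e x)) = emb (e (B x))

/-- Weak commutant lifting, unitary version: if `A, B` are commuting isometries on `H`
and `X̃` is a unitary extension of `A` on `K̃ ⊇ H`, then there is a Hilbert space
`K ⊇ K̃` and commuting unitaries `X, Y` on `K` with `X` extending `X̃` and `Y`
extending `B`. -/
theorem weak_commutant_lifting_unitary {H Kt : Type}
    [NormedAddCommGroup H] [InnerProductSpace ℂ H] [CompleteSpace H]
    [NormedAddCommGroup Kt] [InnerProductSpace ℂ Kt] [CompleteSpace Kt]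
    (A B : H →L[ℂ] H)
    (hA : ContinuousLinearMap.adjoint A ∘L A = 1)
    (hB : ContinuousLinearMap.adjoint B ∘L B = 1)
    (hAB : A ∘L B = B ∘L A)
    (e : H →ₗᵢ[ℂ] Kt) (Xt : Kt →L[ℂ] Kt)
    (hXt_right : Xt ∘L ContinuousLinearMap.adjoint Xt = 1)
    (hXt_left : ContinuousLinearMap.adjoint Xt ∘L Xt = 1)
    (hXtA : ∀ x : H, Xt (e x) = e (A x)) :
    Nonempty (UnitaryCommutantLift B e Xt) := by
  obtain ⟨V, hVadj, hVcomm, hVe⟩ :=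
    isometry_extension A B hB hAB e Xt hXt_right hXt_left hXtA
  obtain ⟨c⟩ := commUnitExt_exists Xt V hXt_right hXt_left hVadj hVcomm
  exact ⟨{ K := c.K, grp := c.grp, ips := c.ips, cpl := c.cpl,
           emb := c.emb, X := c.X, Y := c.Y,
           X_unitary_right := c.hX1, X_unitary_left := c.hX2,
           Y_unitary_right := c.hY1, Y_unitary_left := c.hY2,
           commute := c.comm, X_extends := c.hXe,
           Y_extends := fun x => by rw [c.hYe, hVe] }⟩
end

section
/- (Main theorem, converse direction for the 3-cycle) There exist a Hilbert space H and three pairwise commuting contractions A₁, A₂, A₃ on H such that no Hilbert space K ⊇ H admits unitaries U₁, U₂, U₃ ∈ B(K) that pairwise commute and dilate A₁, A₂, A₃ (i.e., P U_{j₁}⋯U_{j_k}|_H = A_{j₁}⋯A_{j_k} for all words, or even just each Uⱼ dilating Aⱼ with pairwise commutation). -/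
noncomputable section
abbrev Hsp := EuclideanSpace ℂ (Fin 4)

def Afun : Fin 3 → Hsp → Hsp
  | 0 => fun x => !₂[0, 0, x 1, x 0]
  | 1 => fun x => !₂[0, 0, x 0, x 1]
  | 2 => fun x => !₂[0, 0, x 0, -x 1]

lemma Afun_add (j : Fin 3) (x y : Hsp) : Afun j (x + y) = Afun j x + Afun j y := by
  fin_cases j <;> · ext i; fin_cases i <;> simp [Afun] <;> ring

lemma Afun_smul (j : Fin 3) (c : ℂ) (x : Hsp) : Afun j (c • x) = c • Afun j x := by
  fin_cases j <;> · ext i; fin_cases i <;> simp [Afun]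

lemma Afun_norm (j : Fin 3) (x : Hsp) : ‖Afun j x‖ ≤ 1 * ‖x‖ := by
  rw [one_mul, EuclideanSpace.norm_eq, EuclideanSpace.norm_eq]
  apply Real.sqrt_le_sqrt
  fin_cases j <;>
    simp [Afun, Fin.sum_univ_four] <;>
    nlinarith [sq_nonneg ‖x 0‖, sq_nonneg ‖x 1‖, sq_nonneg ‖x 2‖, sq_nonneg ‖x 3‖]

def Aop (j : Fin 3) : Hsp →L[ℂ] Hsp :=
  LinearMap.mkContinuous
    { toFun := Afun j
      map_add' := Afun_add j
      map_smul' := Afun_smul j }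
    1 (Afun_norm j)

lemma Aop_apply (j : Fin 3) (x : Hsp) : Aop j x = Afun j x := rfl

lemma Aop_norm_le (j : Fin 3) : ‖Aop j‖ ≤ 1 := LinearMap.mkContinuous_norm_le _ zero_le_one _

lemma Afun_fst (j : Fin 3) (x : Hsp) : Afun j x 0 = 0 := by fin_cases j <;> simp [Afun]
lemma Afun_snd (j : Fin 3) (x : Hsp) : Afun j x 1 = 0 := by fin_cases j <;> simp [Afun]

lemma Aop_comm (i j : Fin 3) : Aop i ∘L Aop j = Aop j ∘L Aop i := by
  have h : ∀ a b : Fin 3, ∀ x : Hsp, Afun a (Afun b x) = 0 := by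
    intro a b x
    ext k
    have h0 := Afun_fst b x
    have h1 := Afun_snd b x
    fin_cases a <;> fin_cases k <;> simp_all [Afun]
  refine ContinuousLinearMap.ext fun x => ?_
  show Afun i (Afun j x) = Afun j (Afun i x)
  rw [h, h]

-- vectors
def ev (a b : ℂ) : Hsp := !₂[a, b, 0, 0]
def fv (a b : ℂ) : Hsp := !₂[0, 0, a, b]

lemma Aop_ev0 (a b : ℂ) : Aop 0 (ev a b) = fv b a := by
  ext i; fin_cases i <;> simp [Aop_apply, Afun, ev, fv]
lemma Aop_ev1 (a b : ℂ) : Aop 1 (ev a b) = fv a b := by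
  ext i; fin_cases i <;> simp [Aop_apply, Afun, ev, fv]
lemma Aop_ev2 (a b : ℂ) : Aop 2 (ev a b) = fv a (-b) := by
  ext i; fin_cases i <;> simp [Aop_apply, Afun, ev, fv]

lemma norm_ev (a b : ℂ) : ‖ev a b‖ = ‖fv a b‖ := by
  rw [EuclideanSpace.norm_eq, EuclideanSpace.norm_eq]
  simp [ev, fv, Fin.sum_univ_four]

lemma norm_ev_eq (a b : ℂ) : ‖ev a b‖ = Real.sqrt (‖a‖^2 + ‖b‖^2) := by
  rw [EuclideanSpace.norm_eq]; simp [ev, Fin.sum_univ_four]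

lemma norm_fv_eq (a b : ℂ) : ‖fv a b‖ = Real.sqrt (‖a‖^2 + ‖b‖^2) := by
  rw [EuclideanSpace.norm_eq]; simp [fv, Fin.sum_univ_four]
open ContinuousLinearMap in
lemma key_dilation_eq {H : Type} [NormedAddCommGroup H] [InnerProductSpace ℂ H] [CompleteSpace H]
    (A : Fin 3 → H →L[ℂ] H)
    {K : Type} [NormedAddCommGroup K] [InnerProductSpace ℂ K] [CompleteSpace K]
    (emb : H →ₗᵢ[ℂ] K) (U : Fin 3 → K →L[ℂ] K)
    (hl : ∀ j, ContinuousLinearMap.adjoint (U j) ∘L U j = 1)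
    (hd : ∀ (j) (x y : H), (inner ℂ ((U j) (emb x)) (emb y) : ℂ) = (inner ℂ ((A j) x) y : ℂ))
    (j : Fin 3) (u : H) (hn : ‖A j u‖ = ‖u‖) : U j (emb u) = emb (A j u) := by
  have hUl : ∀ z, ContinuousLinearMap.adjoint (U j) (U j z) = z := by
    intro z
    have := congrFun (congrArg DFunLike.coe (hl j)) z
    simpa using this
  have hUinner : ∀ a b : K, (inner ℂ (U j a) (U j b) : ℂ) = inner ℂ a b := by
    intro a b
    rw [← ContinuousLinearMap.adjoint_inner_right, hUl]
  have hzero : (inner ℂ (U j (emb u) - emb (A j u)) (U j (emb u) - emb (A j u)) : ℂ) = 0 := by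
    rw [inner_sub_sub_self]
    have h1 : (inner ℂ (U j (emb u)) (U j (emb u)) : ℂ) = inner ℂ u u := by
      rw [hUinner, emb.inner_map_map]
    have h2 : (inner ℂ (U j (emb u)) (emb (A j u)) : ℂ) = inner ℂ (A j u) (A j u) := hd j u (A j u)
    have h3 : (inner ℂ (emb (A j u)) (U j (emb u)) : ℂ) = inner ℂ (A j u) (A j u) := by
      rw [← inner_conj_symm, h2, inner_conj_symm]
    have h4 : (inner ℂ (emb (A j u)) (emb (A j u)) : ℂ) = inner ℂ (A j u) (A j u) :=
      emb.inner_map_map _ _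
    rw [h1, h2, h3, h4]
    rw [inner_self_eq_norm_sq_to_K, inner_self_eq_norm_sq_to_K, hn]
    ring
  exact sub_eq_zero.mp (inner_self_eq_zero.mp hzero)

end






open ContinuousLinearMap

/-- A triple of pairwise commuting unitaries on some Hilbert space `K ⊇ H`, each
dilating the corresponding operator `Aⱼ` in the power sense
(`P Uⱼⁿ |_H = Aⱼⁿ` for all `n`, expressed by inner products). -/
structure TripleUnitaryDilation {H : Type}
    [NormedAddCommGroup H] [InnerProductSpace ℂ H] [CompleteSpace H]
    (A : Fin 3 → H →L[ℂ] H) where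
  K : Type
  [grp : NormedAddCommGroup K]
  [ips : InnerProductSpace ℂ K]
  [cpl : CompleteSpace K]
  emb : H →ₗᵢ[ℂ] K
  U : Fin 3 → K →L[ℂ] K
  unitary_right : ∀ j, U j ∘L ContinuousLinearMap.adjoint (U j) = 1
  unitary_left : ∀ j, ContinuousLinearMap.adjoint (U j) ∘L U j = 1
  commute : ∀ i j, U i ∘L U j = U j ∘L U i
  dilation : ∀ (j) (n : ℕ) (x y : H),
    (inner ℂ (((U j) ^ n) (emb x)) (emb y) : ℂ) = (inner ℂ (((A j) ^ n) x) y : ℂ)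

/-- A counterexample to Andô's theorem for triples: a Hilbert space `H` and three
pairwise commuting contractions `A₁, A₂, A₃` on `H` admitting no triple of pairwise
commuting unitaries on any Hilbert space `K ⊇ H` that dilates them (even in the weak
sense that each `Uⱼ` dilates `Aⱼ`). -/
structure ParrottCounterexample where
  H : Type
  [grp : NormedAddCommGroup H]
  [ips : InnerProductSpace ℂ H]
  [cpl : CompleteSpace H]
  A : Fin 3 → H →L[ℂ] H
  contraction : ∀ j, ‖A j‖ ≤ 1
  commute : ∀ i j, A i ∘L A j = A j ∘L A i
  no_dilation : ¬ Nonempty (TripleUnitaryDilation A)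

/-- Main theorem, converse direction for the 3-cycle: there exist a Hilbert space `H`
and three pairwise commuting contractions on `H` with no pairwise commuting unitary
dilation on any larger Hilbert space. -/
theorem parrott_counterexample_exists : Nonempty ParrottCounterexample := by
  refine ⟨⟨Hsp, Aop, Aop_norm_le, Aop_comm, ?_⟩⟩
  rintro ⟨⟨K, emb, U, hr, hl, hc, hd⟩⟩
  -- weak dilation property at n = 1
  have hd1 : ∀ (j) (x y : Hsp), (inner ℂ ((U j) (emb x)) (emb y) : ℂ) = inner ℂ ((Aop j) x) y := by
    intro j x y
    have := hd j 1 x y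
    simpa [pow_one] using this
  -- each U j maps embedded `ev` vectors to embedded `fv` vectors
  have hU0 : ∀ a b : ℂ, U 0 (emb (ev a b)) = emb (fv b a) := by
    intro a b
    have := key_dilation_eq Aop emb U hl hd1 0 (ev a b)
      (by rw [Aop_ev0, norm_fv_eq, norm_ev_eq, add_comm])
    rwa [Aop_ev0] at this
  have hU1 : ∀ a b : ℂ, U 1 (emb (ev a b)) = emb (fv a b) := by
    intro a b
    have := key_dilation_eq Aop emb U hl hd1 1 (ev a b)
      (by rw [Aop_ev1, norm_fv_eq, norm_ev_eq])
    rwa [Aop_ev1] at this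
  have hU2 : ∀ a b : ℂ, U 2 (emb (ev a b)) = emb (fv a (-b)) := by
    intro a b
    have := key_dilation_eq Aop emb U hl hd1 2 (ev a b)
      (by rw [Aop_ev2, norm_fv_eq, norm_ev_eq, norm_neg])
    rwa [Aop_ev2] at this
  set V := ContinuousLinearMap.adjoint (U 1) with hV
  have hVU1 : ∀ z, V (U 1 z) = z := by
    intro z
    have := congrFun (congrArg DFunLike.coe (hl 1)) z
    simpa using this
  have hVfv : ∀ a b : ℂ, V (emb (fv a b)) = emb (ev a b) := by
    intro a b
    rw [← hU1 a b, hVU1]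
  -- commutation facts in the multiplicative monoid of endomorphisms
  have hc' : ∀ i j, U i * U j = U j * U i := hc
  have hl' : V * U 1 = 1 := hl 1
  have hr' : U 1 * V = 1 := hr 1
  have hAdjComm : ∀ j, V * U j = U j * V := by
    intro j
    calc V * U j = (V * U j) * (U 1 * V) := by rw [hr', mul_one]
    _ = V * ((U j * U 1) * V) := by rw [mul_assoc, mul_assoc]
    _ = V * ((U 1 * U j) * V) := by rw [hc' j 1]
    _ = (V * U 1) * (U j * V) := by rw [mul_assoc (U 1) (U j) V, ← mul_assoc]
    _ = U j * V := by rw [hl', one_mul]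
  have h1 : U 0 * (V * U 2) = U 2 * (V * U 0) := by
    rw [hAdjComm 2, hAdjComm 0, ← mul_assoc, ← mul_assoc, hc' 0 2]
  have key : ∀ z, V (U 0 (V (U 2 z))) = V (U 2 (V (U 0 z))) := by
    intro z
    have := congrFun (congrArg DFunLike.coe (congrArg (fun T => V * T) h1)) z
    simpa [ContinuousLinearMap.mul_apply] using this
  have hcalc := key (emb (ev 1 1))
  rw [hU2 1 1, hVfv 1 (-1), hU0 1 (-1), hVfv (-1) 1,
      hU0 1 1, hVfv 1 1, hU2 1 1, hVfv 1 (-1)] at hcalc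
  have hev : ev (-1 : ℂ) 1 = ev 1 (-1) := emb.injective hcalc
  have : ((-1 : ℂ)) = 1 := by
    have := congrArg (fun v : Hsp => v 0) hev
    simpa [ev] using this
  exact absurd this (by norm_num)
end

section
/- (Main theorem, converse direction, general cycle) If a graph G on {1,...,n} contains a cycle, then there exists an n-tuple of contractions commuting according to G (indeed pairwise commuting) on some Hilbert space H such that no n-tuple of unitaries on any K ⊇ H commuting according to G dilates them. -/
open ContinuousLinearMap

/-- An `n`-tuple of unitaries on some Hilbert space `K ⊇ H` commuting according to
the graph `G` and dilating the `n`-tuple `A` in the word sense: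
`P U_{j₁} ⋯ U_{j_k} |_H = A_{j₁} ⋯ A_{j_k}` for all words, expressed via inner
products against vectors of `H`. -/
structure GraphUnitaryDilation {n : ℕ} {H : Type}
    [NormedAddCommGroup H] [InnerProductSpace ℂ H] [CompleteSpace H]
    (G : SimpleGraph (Fin n)) (A : Fin n → H →L[ℂ] H) where
  K : Type
  [grp : NormedAddCommGroup K]
  [ips : InnerProductSpace ℂ K]
  [cpl : CompleteSpace K]
  emb : H →ₗᵢ[ℂ] K
  U : Fin n → K →L[ℂ] K
  unitary_right : ∀ j, U j ∘L ContinuousLinearMap.adjoint (U j) = 1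
  unitary_left : ∀ j, ContinuousLinearMap.adjoint (U j) ∘L U j = 1
  commute : ∀ i j, G.Adj i j → U i ∘L U j = U j ∘L U i
  dilation : ∀ (w : List (Fin n)) (x y : H),
    (inner ℂ ((w.map U).prod (emb x)) (emb y) : ℂ) =
      (inner ℂ ((w.map A).prod x) y : ℂ)

/-- A counterexample for a graph `G`: a Hilbert space `H` and contractions
`A₁, …, Aₙ` on `H` which pairwise commute (in particular, commute according to `G`)
but admit no `n`-tuple of unitaries on any `K ⊇ H` commuting according to `G`
that dilates them. -/
structure GraphCounterexample {n : ℕ} (G : SimpleGraph (Fin n)) where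
  H : Type
  [grp : NormedAddCommGroup H]
  [ips : InnerProductSpace ℂ H]
  [cpl : CompleteSpace H]
  A : Fin n → H →L[ℂ] H
  contraction : ∀ j, ‖A j‖ ≤ 1
  commute : ∀ i j, A i ∘L A j = A j ∘L A i
  no_dilation : ¬ Nonempty (GraphUnitaryDilation G A)

/-! ### Auxiliary construction (Parrott-type example on a cycle) -/

local notation "⟪" x ", " y "⟫" => @inner ℂ _ _ x y

noncomputable section

namespace CycleCE

/-- The two-dimensional complex Hilbert space. -/
abbrev H0 : Type := EuclideanSpace ℂ (Fin 2)

/-- The four-dimensional complex Hilbert space, viewed as two copies of `H0`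
(indexed by the first coordinate). -/
abbrev HH : Type := EuclideanSpace ℂ (Fin 2 × Fin 2)

/-- The coordinate swap unitary on `H0`. -/
def Rl : H0 →ₗ[ℂ] H0 where
  toFun x := WithLp.toLp 2 (fun i => x (i + 1))
  map_add' _ _ := rfl
  map_smul' _ _ := rfl

/-- The diagonal unitary `diag(1, -1)` on `H0`. -/
def Tl : H0 →ₗ[ℂ] H0 where
  toFun x := WithLp.toLp 2 (fun i => if i = 0 then x i else - x i)
  map_add' x y := by
    ext i
    by_cases h : i = 0 <;> simp [h] <;> ring
  map_smul' c x := by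
    ext i
    by_cases h : i = 0 <;> simp [h]

/-- Inclusion of `H0` as the top copy in `HH`. -/
def incl0l : H0 →ₗ[ℂ] HH where
  toFun x := WithLp.toLp 2 (fun bi : Fin 2 × Fin 2 => if bi.1 = 0 then x bi.2 else 0)
  map_add' x y := by
    ext bi
    by_cases h : bi.1 = 0 <;> simp [h]
  map_smul' c x := by
    ext bi
    by_cases h : bi.1 = 0 <;> simp [h]

/-- Inclusion of `H0` as the bottom copy in `HH`. -/
def incl1l : H0 →ₗ[ℂ] HH where
  toFun x := WithLp.toLp 2 (fun bi : Fin 2 × Fin 2 => if bi.1 = 1 then x bi.2 else 0)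
  map_add' x y := by
    ext bi
    by_cases h : bi.1 = 1 <;> simp [h]
  map_smul' c x := by
    ext bi
    by_cases h : bi.1 = 1 <;> simp [h]

/-- Projection of `HH` onto the top copy of `H0`. -/
def proj0l : HH →ₗ[ℂ] H0 where
  toFun v := WithLp.toLp 2 (fun i => v (0, i))
  map_add' _ _ := rfl
  map_smul' _ _ := rfl

def Rc : H0 →L[ℂ] H0 := Rl.toContinuousLinearMap
def Tc : H0 →L[ℂ] H0 := Tl.toContinuousLinearMap
def incl0c : H0 →L[ℂ] HH := incl0l.toContinuousLinearMap
def incl1c : H0 →L[ℂ] HH := incl1l.toContinuousLinearMap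
def proj0c : HH →L[ℂ] H0 := proj0l.toContinuousLinearMap

@[simp] lemma Rc_apply (x : H0) (i : Fin 2) : Rc x i = x (i + 1) := rfl
@[simp] lemma Tc_apply (x : H0) (i : Fin 2) : Tc x i = if i = 0 then x i else - x i := rfl
@[simp] lemma incl0c_apply (x : H0) (bi : Fin 2 × Fin 2) :
    incl0c x bi = if bi.1 = 0 then x bi.2 else 0 := rfl
@[simp] lemma incl1c_apply (x : H0) (bi : Fin 2 × Fin 2) :
    incl1c x bi = if bi.1 = 1 then x bi.2 else 0 := rfl
@[simp] lemma proj0c_apply (v : HH) (i : Fin 2) : proj0c v i = v (0, i) := rfl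

lemma inner_H0 (x y : H0) :
    ⟪x, y⟫ = (starRingEnd ℂ) (x 0) * y 0 + (starRingEnd ℂ) (x 1) * y 1 := by
  simp [PiLp.inner_apply, RCLike.inner_apply, Fin.sum_univ_two]; ring

lemma inner_HH (v w : HH) :
    ⟪v, w⟫ = ((starRingEnd ℂ) (v (0,0)) * w (0,0) + (starRingEnd ℂ) (v (0,1)) * w (0,1))
      + ((starRingEnd ℂ) (v (1,0)) * w (1,0) + (starRingEnd ℂ) (v (1,1)) * w (1,1)) := by
  simp [PiLp.inner_apply, RCLike.inner_apply, Fintype.sum_prod_type, Fin.sum_univ_two]; ring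

lemma proj0_incl0 (x : H0) : proj0c (incl0c x) = x := by
  ext i; simp

lemma proj0_incl1 (x : H0) : proj0c (incl1c x) = 0 := by
  ext i; simp

lemma inner_incl0 (x y : H0) : ⟪incl0c x, incl0c y⟫ = ⟪x, y⟫ := by
  rw [inner_HH, inner_H0]; simp

lemma inner_incl1 (x y : H0) : ⟪incl1c x, incl1c y⟫ = ⟪x, y⟫ := by
  rw [inner_HH, inner_H0]; simp

lemma inner_R (x y : H0) : ⟪Rc x, Rc y⟫ = ⟪x, y⟫ := by
  rw [inner_H0, inner_H0]
  have h1 : (0 : Fin 2) + 1 = 1 := rfl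
  have h2 : (1 : Fin 2) + 1 = 0 := rfl
  simp [h1, h2]; ring

lemma inner_T (x y : H0) : ⟪Tc x, Tc y⟫ = ⟪x, y⟫ := by
  rw [inner_H0, inner_H0]
  simp

lemma norm_eq_of_inner_eq {E F : Type*} [NormedAddCommGroup E] [InnerProductSpace ℂ E]
    [NormedAddCommGroup F] [InnerProductSpace ℂ F] {x : E} {y : F}
    (h : ⟪x, x⟫ = ⟪y, y⟫) : ‖x‖ = ‖y‖ := by
  rw [@norm_eq_sqrt_re_inner ℂ, @norm_eq_sqrt_re_inner ℂ, h]

lemma norm_incl1 (x : H0) : ‖incl1c x‖ = ‖x‖ :=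
  norm_eq_of_inner_eq (inner_incl1 x x)

lemma norm_proj0_le (v : HH) : ‖proj0c v‖ ≤ ‖v‖ := by
  rw [EuclideanSpace.norm_eq, EuclideanSpace.norm_eq]
  apply Real.sqrt_le_sqrt
  rw [Fin.sum_univ_two, Fintype.sum_prod_type, Fin.sum_univ_two, Fin.sum_univ_two,
    Fin.sum_univ_two]
  simp only [proj0c_apply]
  have h1 : (0:ℝ) ≤ ‖v (1,0)‖ ^ 2 + ‖v (1,1)‖ ^ 2 := by positivity
  linarith

/-- The basic building block `A_B = ι₁ ∘ B ∘ π₀` on `HH = H0 ⊕ H0`, i.e. the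
block operator `[[0, 0], [B, 0]]`. -/
def Amap (Bop : H0 →L[ℂ] H0) : HH →L[ℂ] HH := incl1c ∘L Bop ∘L proj0c

lemma Amap_apply (Bop : H0 →L[ℂ] H0) (v : HH) : Amap Bop v = incl1c (Bop (proj0c v)) := rfl

lemma Amap_incl0 (Bop : H0 →L[ℂ] H0) (x : H0) : Amap Bop (incl0c x) = incl1c (Bop x) := by
  rw [Amap_apply, proj0_incl0]

lemma Amap_comp_Amap (B1 B2 : H0 →L[ℂ] H0) : Amap B1 ∘L Amap B2 = 0 := by
  ext v : 1
  show Amap B1 (Amap B2 v) = 0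
  rw [Amap_apply B2, Amap_apply, proj0_incl1]
  simp

lemma norm_Amap_le (Bop : H0 →L[ℂ] H0) (hB : ∀ x y, ⟪Bop x, Bop y⟫ = ⟪x, y⟫) :
    ‖Amap Bop‖ ≤ 1 := by
  apply ContinuousLinearMap.opNorm_le_bound _ zero_le_one
  intro v
  rw [one_mul, Amap_apply, norm_incl1, norm_eq_of_inner_eq (hB (proj0c v) (proj0c v))]
  exact norm_proj0_le v

/-- The first standard basis vector of `H0`. -/
def e0 : H0 := WithLp.toLp 2 (fun i => if i = 0 then 1 else 0)
/-- The second standard basis vector of `H0`. -/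
def e1 : H0 := WithLp.toLp 2 (fun i => if i = 0 then 0 else 1)

lemma Rc_e1 : Rc e1 = e0 := by
  ext i
  fin_cases i <;> simp [e0, e1]

lemma Tc_e0 : Tc e0 = e0 := by
  ext i
  fin_cases i <;> simp [e0]

lemma Tc_e1 : Tc e1 = -e1 := by
  ext i
  fin_cases i <;> simp [e1]

lemma inner_e1_e1 : ⟪e1, e1⟫ = 1 := by
  rw [inner_H0]; simp [e1]

/-- Vertices of a walk via `getVert` agree with `support` indexing. -/
lemma support_getElem_eq_getVert {V : Type*} {G : SimpleGraph V} {u v : V} (p : G.Walk u v)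
    (i : ℕ) (h : i < p.support.length) : p.support[i] = p.getVert i := by
  induction p generalizing i with
  | nil =>
    have hi : i = 0 := by simpa using h
    subst hi; rfl
  | cons hadj q ih =>
    rcases i with _ | i
    · simp [SimpleGraph.Walk.support_cons]
    · simp only [SimpleGraph.Walk.support_cons, List.getElem_cons_succ,
        SimpleGraph.Walk.getVert_cons_succ]
      exact ih i (by simpa [SimpleGraph.Walk.support_cons] using h)

end CycleCE

end

open CycleCE in
/-- Main theorem, converse direction: if a graph `G` on `{1, …, n}` contains a cycle,
then there is an `n`-tuple of (pairwise commuting) contractions on some Hilbert space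
with no unitary dilation commuting according to `G`. -/
theorem cycle_graph_counterexample {n : ℕ} (G : SimpleGraph (Fin n))
    (hG : ¬ G.IsAcyclic) : Nonempty (GraphCounterexample G) := by
  classical
  -- extract a cycle
  have hG' : ∃ (v : Fin n) (p : G.Walk v v), p.IsCycle := by
    by_contra h
    push_neg at h
    exact hG fun v p hp => h v p hp
  obtain ⟨v, p, hp⟩ := hG'
  set m := p.length with hm
  have hm3 : 3 ≤ m := hp.three_le_length
  set c : ℕ → Fin n := p.getVert with hcdef
  have hlen : p.support.length = m + 1 := by rw [SimpleGraph.Walk.length_support]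
  -- injectivity of the cycle vertices on [1, m]
  have hinj : ∀ i j : ℕ, 1 ≤ i → i ≤ m → 1 ≤ j → j ≤ m → c i = c j → i = j := by
    intro i j hi1 him hj1 hjm hij
    have hnd : p.support.tail.Nodup := hp.support_nodup
    have htl : p.support.tail.length = m := by
      rw [List.length_tail, hlen]; omega
    have h1 : p.support.tail[i-1]'(by omega) = c i := by
      rw [List.getElem_tail, support_getElem_eq_getVert]
      show p.getVert (i - 1 + 1) = c i
      congr 1
      omega
    have h2 : p.support.tail[j-1]'(by omega) = c j := by
      rw [List.getElem_tail, support_getElem_eq_getVert]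
      show p.getVert (j - 1 + 1) = c j
      congr 1
      omega
    have := hnd.getElem_inj_iff.mp (h1.trans (hij.trans h2.symm))
    omega
  have hc0 : c 0 = v := p.getVert_zero
  have hcm : c m = v := p.getVert_length
  have hcm0 : c m = c 0 := by rw [hcm, hc0]
  have hc01 : c 0 ≠ c 1 := by
    intro h
    have : m = 1 := hinj m 1 (by omega) le_rfl le_rfl (by omega) (by rw [hcm0, h])
    omega
  -- the unitaries labelling the vertices
  set B : Fin n → (H0 →L[ℂ] H0) :=
    fun j => if j = c 1 then Tc else if j = c 0 then Rc else 1 with hBdef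
  have hB : ∀ j (x y : H0), ⟪B j x, B j y⟫ = ⟪x, y⟫ := by
    intro j x y
    simp only [hBdef]
    split_ifs
    · exact inner_T x y
    · exact inner_R x y
    · rfl
  have hBc1 : B (c 1) = Tc := by simp only [hBdef]; simp
  have hBc0 : B (c 0) = Rc := by simp only [hBdef]; rw [if_neg hc01]; simp
  have hBci : ∀ i, 2 ≤ i → i ≤ m - 1 → B (c i) = 1 := by
    intro i h2 hm1
    have hne1 : c i ≠ c 1 := fun h => by
      have := hinj i 1 (by omega) (by omega) le_rfl (by omega) h; omega
    have hne0 : c i ≠ c 0 := fun h => by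
      have := hinj i m (by omega) (by omega) (by omega) le_rfl (by rw [h, ← hcm0]); omega
    simp only [hBdef]
    rw [if_neg hne1, if_neg hne0]
  -- the counterexample
  refine ⟨{ H := HH
            A := fun j => Amap (B j)
            contraction := fun j => norm_Amap_le (B j) (hB j)
            commute := fun i j => by rw [Amap_comp_Amap, Amap_comp_Amap]
            no_dilation := ?_ }⟩
  rintro ⟨⟨K, emb, U, hUr, hUl, hcommU, hdil⟩⟩
  -- unitaries preserve inner products
  have hU : ∀ (j : Fin n) (a b : K), ⟪U j a, U j b⟫ = ⟪a, b⟫ := by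
    intro j a b
    have h := congrArg (fun (T : K →L[ℂ] K) => T a) (hUl j)
    simp only [ContinuousLinearMap.comp_apply, ContinuousLinearMap.one_apply] at h
    rw [← ContinuousLinearMap.adjoint_inner_left (U j) b (U j a), h]
  -- the dilation property for single-letter words
  have hdil1 : ∀ (j : Fin n) (x y : HH),
      ⟪U j (emb x), emb y⟫ = ⟪Amap (B j) x, y⟫ := by
    intro j x y
    have h := hdil [j] x y
    simpa using h
  -- the unitaries are determined on the embedded top copy
  have step2 : ∀ (j : Fin n) (x : H0), U j (emb (incl0c x)) = emb (incl1c (B j x)) := by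
    intro j x
    have h1 : ⟪U j (emb (incl0c x)), U j (emb (incl0c x))⟫ = ⟪x, x⟫ := by
      rw [hU, emb.inner_map_map, inner_incl0]
    have h2 : ⟪emb (incl1c (B j x)), emb (incl1c (B j x))⟫ = ⟪x, x⟫ := by
      rw [emb.inner_map_map, inner_incl1, hB]
    have h3 : ⟪U j (emb (incl0c x)), emb (incl1c (B j x))⟫ = ⟪x, x⟫ := by
      rw [hdil1, Amap_incl0, inner_incl1, hB]
    have h4 : ⟪emb (incl1c (B j x)), U j (emb (incl0c x))⟫ = ⟪x, x⟫ := by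
      rw [← inner_conj_symm, h3]
      exact inner_conj_symm x x
    have hz : ⟪U j (emb (incl0c x)) - emb (incl1c (B j x)),
        U j (emb (incl0c x)) - emb (incl1c (B j x))⟫ = 0 := by
      rw [inner_sub_sub_self, h1, h2, h3, h4]; ring
    exact sub_eq_zero.mp (inner_self_eq_zero.mp hz)
  -- commutation transfers to the bottom copy
  have step3 : ∀ a b : Fin n, G.Adj a b → ∀ x : H0,
      U a (emb (incl1c (B b x))) = U b (emb (incl1c (B a x))) := by
    intro a b hab x
    have h := congrArg (fun (T : K →L[ℂ] K) => T (emb (incl0c x))) (hcommU a b hab)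
    simp only [ContinuousLinearMap.comp_apply] at h
    rw [step2 b, step2 a] at h
    exact h
  -- follow a vector around the cycle
  set g : ℕ → H0 → K := fun i y => U (c i) (emb (incl1c y)) with hg
  have rel : ∀ i, i < m → ∀ x : H0, g i (B (c (i+1)) x) = g (i+1) (B (c i) x) := by
    intro i hi x
    exact step3 (c i) (c (i+1)) (p.adj_getVert_succ hi) x
  have hgm : ∀ y : H0, g m y = g 0 y := by
    intro y
    simp only [hg]
    rw [hcm0]
  have chain : ∀ k, 1 ≤ k → k ≤ m - 1 → g k e0 = g 1 e0 := by
    intro k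
    induction k with
    | zero => omega
    | succ k ih =>
      intro h1 h2
      rcases Nat.lt_or_ge 1 (k+1) with hlt | hle
      · have hk1 : 1 ≤ k := by omega
        have h := rel k (by omega) e0
        have hL : B (c (k+1)) e0 = e0 := by
          rw [hBci (k+1) (by omega) h2, ContinuousLinearMap.one_apply]
        have hR : B (c k) e0 = e0 := by
          rcases eq_or_lt_of_le hk1 with heq | hgt
          · rw [← heq, hBc1, Tc_e0]
          · rw [hBci k (by omega) (by omega), ContinuousLinearMap.one_apply]
        rw [hL, hR] at h
        rw [← h]
        exact ih hk1 (by omega)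
      · have hk : k + 1 = 1 := by omega
        rw [hk]
  have h01 : g 0 (-e1) = g 1 e0 := by
    have h := rel 0 (by omega) e1
    rw [hBc1, hBc0, Tc_e1, Rc_e1] at h
    exact h
  have hlast : g (m-1) e0 = g 0 e1 := by
    have h := rel (m-1) (by omega) e1
    have hmm : m - 1 + 1 = m := by omega
    rw [hmm, hcm0, hBc0, Rc_e1, hBci (m-1) (by omega) le_rfl,
      ContinuousLinearMap.one_apply, hgm] at h
    exact h
  have key : g 0 e1 = g 0 (-e1) := by
    rw [← hlast, chain (m-1) (by omega) le_rfl, ← h01]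
  have hgg : ∀ y z : H0, ⟪g 0 y, g 0 z⟫ = ⟪y, z⟫ := by
    intro y z
    simp only [hg]
    rw [hU, emb.inner_map_map, inner_incl1]
  have hfin : (⟪e1, e1⟫ : ℂ) = ⟪-e1, e1⟫ := by
    rw [← hgg e1 e1]
    nth_rewrite 1 [key]
    exact hgg (-e1) e1
  rw [inner_neg_left, inner_e1_e1] at hfin
  norm_num at hfin
end
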